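/- arXiv:2602.12637 — 3 statements merged into one kernel-verified Lean document; each statement's English description precedes it below -/
import Mathlib

section
/- Let 1 ≤ m and 2m ≤ n. Let h = gl_m(ℂ) ⊕ gl_{n−m}(ℂ) be embedded block-diagonally in gl_n(ℂ), and let h^⊥ be the orthogonal complement of h in gl_n(ℂ) with respect to the trace form (so h^⊥ is the space of block off-diagonal matrices). Then the minimum over X ∈ h^⊥ of dim{Y ∈ h : [Y,X] = 0} equals (n−2m)² + m; in particular there exists X ∈ h^⊥ whose centralizer in h has dimension exactly (n−2m)² + m. -/
/-! Common definitions: `gl n` = n×n complex matrices with commutator bracket;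
sl₂-triples; Jordan type of a nilpotent matrix; centralizers; sphericality. -/

open Matrix

/-- The general linear Lie algebra `gl_n(ℂ)`: n×n complex matrices, with bracket
`⁅X, Y⁆ = X * Y - Y * X` (coming from the associative ring structure). -/
abbrev gl (n : ℕ) : Type := Matrix (Fin n) (Fin n) ℂ

/-- An sl₂-triple `(h, e, f)` in a complex Lie algebra: `⁅h,e⁆ = 2e`, `⁅h,f⁆ = −2f`,
`⁅e,f⁆ = h`. -/
def Sl2Triple {L : Type*} [LieRing L] [LieAlgebra ℂ L] (h e f : L) : Prop :=
  ⁅h, e⁆ = (2 : ℂ) • e ∧ ⁅h, f⁆ = (-2 : ℂ) • f ∧ ⁅e, f⁆ = h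

/-- A matrix `e` has Jordan type `lam` if `dim ker (e^j) = Σᵢ min (lamᵢ, j)` for all `j ≥ 1`. -/
def HasJordanType {I : Type*} [Fintype I] [DecidableEq I] {m : ℕ}
    (e : Matrix I I ℂ) (lam : Nat.Partition m) : Prop :=
  ∀ j : ℕ, 1 ≤ j →
    Module.finrank ℂ (LinearMap.ker (e ^ j).mulVecLin) =
      (lam.parts.map fun p => min p j).sum

/-- The centralizer of a subset `s` of a complex Lie algebra, as a Lie subalgebra:
`{x | ⁅y, x⁆ = 0 for all y ∈ s}`. -/
def lieCentralizer {L : Type*} [LieRing L] [LieAlgebra ℂ L] (s : Set L) :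
    LieSubalgebra ℂ L where
  carrier := {x | ∀ y ∈ s, ⁅y, x⁆ = 0}
  zero_mem' := by intro y _; exact lie_zero y
  add_mem' := by
    intro a b ha hb y hy
    rw [lie_add, ha y hy, hb y hy, add_zero]
  smul_mem' := by
    intro c a ha y hy
    rw [lie_smul, ha y hy, smul_zero]
  lie_mem' := by
    intro a b ha hb y hy
    rw [leibniz_lie, ha y hy, hb y hy, zero_lie, lie_zero, add_zero]

/-- A Lie subalgebra `k` of `l` is spherical in `l` if there is a solvable Lie subalgebra
`b` of `l` with `b + k = l` (sum of underlying subspaces). -/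
def IsSphericalIn {L : Type*} [LieRing L] [LieAlgebra ℂ L]
    (k l : LieSubalgebra ℂ L) : Prop :=
  ∃ b : LieSubalgebra ℂ L, b ≤ l ∧ LieAlgebra.IsSolvable b ∧
    b.toSubmodule ⊔ k.toSubmodule = l.toSubmodule

/-- The eigenspace of `ad h` with eigenvalue `μ`, i.e. `{x | ⁅h, x⁆ = μ • x}`. -/
def adEigenspace {L : Type*} [LieRing L] [LieAlgebra ℂ L] (h : L) (μ : ℂ) :
    Submodule ℂ L where
  carrier := {x | ⁅h, x⁆ = μ • x}
  zero_mem' := by simp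
  add_mem' := by
    intro a b ha hb
    simp only [Set.mem_setOf_eq] at *
    rw [lie_add, ha, hb, smul_add]
  smul_mem' := by
    intro c x hx
    simp only [Set.mem_setOf_eq] at *
    rw [lie_smul, hx, smul_comm]

/-- The block-diagonal subalgebra `gl_m(ℂ) ⊕ gl_k(ℂ)` of `gl_{m+k}(ℂ)` (as a subspace):
matrices whose two off-diagonal blocks vanish. -/
noncomputable def diagPair (m k : ℕ) :
    Submodule ℂ (Matrix (Fin m ⊕ Fin k) (Fin m ⊕ Fin k) ℂ) where
  carrier := {X | (∀ i j, X (Sum.inl i) (Sum.inr j) = 0) ∧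
    ∀ i j, X (Sum.inr i) (Sum.inl j) = 0}
  zero_mem' := by constructor <;> intro i j <;> simp
  add_mem' := by
    rintro a b ⟨ha1, ha2⟩ ⟨hb1, hb2⟩
    constructor <;> intro i j <;> simp [Matrix.add_apply, ha1, ha2, hb1, hb2]
  smul_mem' := by
    rintro c a ⟨ha1, ha2⟩
    constructor <;> intro i j <;> simp [Matrix.smul_apply, ha1, ha2]

/-- The orthogonal complement of a subset of `gl_n(ℂ)` with respect to the trace form
`⟨X,Y⟩ = tr(XY)`. -/
def perpOf {I : Type*} [Fintype I] [DecidableEq I] (s : Set (Matrix I I ℂ)) :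
    Set (Matrix I I ℂ) :=
  {X | ∀ Y ∈ s, Matrix.trace (X * Y) = 0}

/-- The centralizer `{Y ∈ h | ⁅Y, X⁆ = 0}` of `X` inside a subspace `h` of `gl_n(ℂ)`. -/
noncomputable def centIn {I : Type*} [Fintype I] [DecidableEq I]
    (h : Submodule ℂ (Matrix I I ℂ)) (X : Matrix I I ℂ) :
    Submodule ℂ (Matrix I I ℂ) where
  carrier := {Y | Y ∈ h ∧ ⁅Y, X⁆ = 0}
  zero_mem' := ⟨h.zero_mem, by rw [Ring.lie_def, zero_mul, mul_zero, sub_self]⟩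
  add_mem' := by
    rintro a b ⟨ha1, ha2⟩ ⟨hb1, hb2⟩
    exact ⟨h.add_mem ha1 hb1, by
      rw [Ring.lie_def] at ha2 hb2 ⊢
      rw [add_mul, mul_add, sub_eq_zero.mp ha2, sub_eq_zero.mp hb2, sub_self]⟩
  smul_mem' := by
    rintro c a ⟨ha1, ha2⟩
    exact ⟨h.smul_mem c ha1, by
      rw [Ring.lie_def] at ha2 ⊢
      rw [smul_mul_assoc, mul_smul_comm, sub_eq_zero.mp ha2, sub_self]⟩

open Module LinearMap Submodule

section HomDim

variable {Y Z : Type*} [AddCommGroup Y] [Module ℂ Y] [AddCommGroup Z] [Module ℂ Z]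

/-- Maps killing `J` with range inside `K`. -/
def homBetween (J : Submodule ℂ Y) (K : Submodule ℂ Z) : Submodule ℂ (Y →ₗ[ℂ] Z) where
  carrier := {f | J ≤ ker f ∧ range f ≤ K}
  zero_mem' := ⟨by simp, by simp⟩
  add_mem' := by
    rintro f g ⟨hf1, hf2⟩ ⟨hg1, hg2⟩
    refine ⟨fun x hx => ?_, ?_⟩
    · have := hf1 hx; have := hg1 hx
      simp only [mem_ker] at *
      simp [*]
    · rintro z ⟨x, rfl⟩
      exact K.add_mem (hf2 ⟨x, rfl⟩) (hg2 ⟨x, rfl⟩)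
  smul_mem' := by
    rintro c f ⟨hf1, hf2⟩
    refine ⟨fun x hx => ?_, ?_⟩
    · have := hf1 hx
      simp only [mem_ker] at *
      simp [*]
    · rintro z ⟨x, rfl⟩
      exact K.smul_mem c (hf2 ⟨x, rfl⟩)

noncomputable def homBetweenMap (J : Submodule ℂ Y) (K : Submodule ℂ Z) :
    ((Y ⧸ J) →ₗ[ℂ] ↥K) →ₗ[ℂ] (Y →ₗ[ℂ] Z) :=
  (LinearMap.lcomp ℂ Z J.mkQ).comp (LinearMap.llcomp ℂ (Y ⧸ J) ↥K Z K.subtype)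

lemma homBetweenMap_apply (J : Submodule ℂ Y) (K : Submodule ℂ Z)
    (M : (Y ⧸ J) →ₗ[ℂ] ↥K) (y : Y) : homBetweenMap J K M y = (M (J.mkQ y) : Z) := rfl

lemma homBetweenMap_injective (J : Submodule ℂ Y) (K : Submodule ℂ Z) :
    Function.Injective (homBetweenMap J K) := by
  intro M N h
  refine LinearMap.ext fun x => ?_
  obtain ⟨y, rfl⟩ := J.mkQ_surjective x
  have h2 : (homBetweenMap J K M) y = (homBetweenMap J K N) y := by rw [h]
  rw [homBetweenMap_apply, homBetweenMap_apply] at h2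
  exact Subtype.ext h2

lemma homBetweenMap_range (J : Submodule ℂ Y) (K : Submodule ℂ Z) :
    LinearMap.range (homBetweenMap J K) = homBetween J K := by
  apply le_antisymm
  · rintro f ⟨M, rfl⟩
    constructor
    · intro x hx
      simp only [mem_ker, homBetweenMap_apply]
      have : J.mkQ x = 0 := by simpa [Submodule.Quotient.mk_eq_zero] using hx
      simp [this]
    · rintro z ⟨x, rfl⟩
      simp only [homBetweenMap_apply]
      exact (M (J.mkQ x)).2
  · rintro f ⟨hf1, hf2⟩
    refine ⟨LinearMap.codRestrict K (J.liftQ f hf1) (fun x => ?_), ?_⟩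
    · obtain ⟨y, rfl⟩ := J.mkQ_surjective x
      simpa using hf2 ⟨y, rfl⟩
    · ext y
      simp [homBetweenMap_apply]

lemma finrank_homBetween [FiniteDimensional ℂ Y] [FiniteDimensional ℂ Z]
    (J : Submodule ℂ Y) (K : Submodule ℂ Z) :
    finrank ℂ ↥(homBetween J K) = (finrank ℂ Y - finrank ℂ ↥J) * finrank ℂ ↥K := by
  have h1 : finrank ℂ ↥(homBetween J K) = finrank ℂ ((Y ⧸ J) →ₗ[ℂ] ↥K) := by
    rw [← homBetweenMap_range J K]
    exact (LinearEquiv.finrank_eq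
      (LinearEquiv.ofInjective _ (homBetweenMap_injective J K))).symm
  rw [h1, Module.finrank_linearMap]
  congr 1
  have := Submodule.finrank_quotient_add_finrank J
  omega

end HomDim
section ConjRank

variable {X Y Z W : Type*} [AddCommGroup X] [Module ℂ X] [AddCommGroup Y] [Module ℂ Y]
  [AddCommGroup Z] [Module ℂ Z] [AddCommGroup W] [Module ℂ W]

/-- `M ↦ c ∘ M ∘ b`. -/
noncomputable def conjMap (b : X →ₗ[ℂ] Y) (c : Z →ₗ[ℂ] W) :
    (Y →ₗ[ℂ] Z) →ₗ[ℂ] (X →ₗ[ℂ] W) :=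
  (LinearMap.lcomp ℂ W b).comp (LinearMap.llcomp ℂ Y Z W c)

lemma conjMap_apply (b : X →ₗ[ℂ] Y) (c : Z →ₗ[ℂ] W) (M : Y →ₗ[ℂ] Z) :
    conjMap b c M = c ∘ₗ M ∘ₗ b := rfl

lemma rank_conjMap_ge [FiniteDimensional ℂ X] [FiniteDimensional ℂ Y]
    [FiniteDimensional ℂ Z] [FiniteDimensional ℂ W] (b : X →ₗ[ℂ] Y) (c : Z →ₗ[ℂ] W) :
    finrank ℂ ↥(range b) * finrank ℂ ↥(range c) ≤ finrank ℂ ↥(range (conjMap b c)) := by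
  obtain ⟨Q, hQ⟩ := Submodule.exists_isCompl (range b)
  set π := (range b).linearProjOfIsCompl Q hQ with hπ
  set ζ : (↥(range b) →ₗ[ℂ] Z) →ₗ[ℂ] (Y →ₗ[ℂ] Z) := LinearMap.lcomp ℂ Z π with hζ
  set μ := (conjMap b c).comp ζ with hμ
  have hker : ker μ = homBetween (⊥ : Submodule ℂ ↥(range b)) (ker c) := by
    ext M'
    simp only [mem_ker, homBetween, Submodule.mem_mk, AddSubmonoid.mem_mk,
      AddSubsemigroup.mem_mk, Set.mem_setOf_eq]
    constructor
    · intro h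
      refine ⟨bot_le, ?_⟩
      rintro z ⟨u, rfl⟩
      obtain ⟨x, hx⟩ : ∃ x, b.rangeRestrict x = u := b.surjective_rangeRestrict u
      have h2 : μ M' x = 0 := by rw [h]; rfl
      have h3 : μ M' x = c (M' (π (b x))) := rfl
      have h4 : π (b x) = u := by
        rw [← hx]
        exact Submodule.linearProjOfIsCompl_apply_left hQ (b.rangeRestrict x)
      simp only [mem_ker]
      rw [← h4]
      rw [h3, h4] at h2
      rw [h4]
      exact h2
    · rintro ⟨-, h2⟩
      refine LinearMap.ext fun x => ?_
      have h3 : μ M' x = c (M' (π (b x))) := rfl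
      have : M' (π (b x)) ∈ ker c := h2 ⟨π (b x), rfl⟩
      simp only [mem_ker] at this
      simp [h3, this]
  have hrn : finrank ℂ ↥(range μ) + finrank ℂ ↥(ker μ) = finrank ℂ (↥(range b) →ₗ[ℂ] Z) :=
    finrank_range_add_finrank_ker μ
  have hkd : finrank ℂ ↥(ker μ) = finrank ℂ ↥(range b) * finrank ℂ ↥(ker c) := by
    rw [hker, finrank_homBetween]
    simp
  have hhom : finrank ℂ (↥(range b) →ₗ[ℂ] Z) = finrank ℂ ↥(range b) * finrank ℂ Z :=
    Module.finrank_linearMap ℂ ℂ _ _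
  have hZ : finrank ℂ ↥(range c) + finrank ℂ ↥(ker c) = finrank ℂ Z :=
    finrank_range_add_finrank_ker c
  have hle : finrank ℂ ↥(range μ) ≤ finrank ℂ ↥(range (conjMap b c)) := by
    apply Submodule.finrank_mono
    rw [hμ]
    exact LinearMap.range_comp_le_range _ _
  have hsplit : finrank ℂ ↥(range b) * finrank ℂ Z
      = finrank ℂ ↥(range b) * finrank ℂ ↥(range c)
        + finrank ℂ ↥(range b) * finrank ℂ ↥(ker c) := by
    rw [← hZ, Nat.mul_add]
  set a1 := finrank ℂ ↥(range μ)
  set a2 := finrank ℂ ↥(range (conjMap b c))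
  set p1 := finrank ℂ ↥(range b) * finrank ℂ ↥(range c)
  set p2 := finrank ℂ ↥(range b) * finrank ℂ ↥(ker c)
  set p3 := finrank ℂ ↥(range b) * finrank ℂ Z
  omega

end ConjRank
section LemC

variable {V : Type*} [AddCommGroup V] [Module ℂ V]

/-- The commutant of an endomorphism, as a submodule of the endomorphism space. -/
def commS (N : V →ₗ[ℂ] V) : Submodule ℂ (V →ₗ[ℂ] V) where
  carrier := {M | N ∘ₗ M = M ∘ₗ N}
  zero_mem' := by simp
  add_mem' := by
    intro a b ha hb
    simp only [Set.mem_setOf_eq] at *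
    rw [LinearMap.comp_add, LinearMap.add_comp, ha, hb]
  smul_mem' := by
    intro cc a ha
    simp only [Set.mem_setOf_eq] at *
    refine LinearMap.ext fun x => ?_
    have := congrArg (fun f => f x) ha
    simp only [LinearMap.comp_apply] at this ⊢
    simp [LinearMap.smul_apply, this]

lemma mem_commS_iff {N M : V →ₗ[ℂ] V} : M ∈ commS N ↔ ∀ x, N (M x) = M (N x) := by
  constructor
  · intro h x
    exact congrArg (fun f => f x) h
  · intro h
    exact LinearMap.ext fun x => h x

/-- Restriction of `N` to its range. -/
noncomputable def Nres (N : V →ₗ[ℂ] V) : ↥(range N) →ₗ[ℂ] ↥(range N) :=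
  N.restrict (fun x _ => ⟨x, rfl⟩)

lemma commS_stab {N M : V →ₗ[ℂ] V} (hM : M ∈ commS N) :
    ∀ x ∈ range N, M x ∈ range N := by
  rintro x ⟨y, rfl⟩
  rw [mem_commS_iff] at hM
  exact ⟨M y, hM y⟩

/-- The restriction map from the commutant of `N` to endomorphisms of `range N`. -/
noncomputable def restrictMap (N : V →ₗ[ℂ] V) :
    ↥(commS N) →ₗ[ℂ] (↥(range N) →ₗ[ℂ] ↥(range N)) where
  toFun M := M.1.restrict (commS_stab M.2)
  map_add' := by
    intro a b
    refine LinearMap.ext fun x => ?_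
    apply Subtype.ext
    simp [LinearMap.restrict_apply]
  map_smul' := by
    intro c a
    refine LinearMap.ext fun x => ?_
    apply Subtype.ext
    simp [LinearMap.restrict_apply]

lemma finrank_ker_restrictMap_ge [FiniteDimensional ℂ V] (N : V →ₗ[ℂ] V) :
    (finrank ℂ V - finrank ℂ ↥(range N)) ^ 2 ≤ finrank ℂ ↥(ker (restrictMap N)) := by
  have hmem : ∀ g : ↥(homBetween (range N) (ker N)), g.1 ∈ commS N := by
    rintro ⟨g, hg1, hg2⟩
    rw [mem_commS_iff]
    intro x
    have h1 : N (g x) = 0 := by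
      have : g x ∈ ker N := hg2 ⟨x, rfl⟩
      simpa using this
    have h2 : g (N x) = 0 := by
      have : N x ∈ ker g := hg1 ⟨x, rfl⟩
      simpa using this
    rw [h1, h2]
  have hker : ∀ g : ↥(homBetween (range N) (ker N)),
      (⟨g.1, hmem g⟩ : ↥(commS N)) ∈ ker (restrictMap N) := by
    rintro ⟨g, hg1, hg2⟩
    simp only [mem_ker]
    refine LinearMap.ext fun x => ?_
    apply Subtype.ext
    have hx : g x.1 = 0 := by
      have : x.1 ∈ ker g := hg1 x.2
      simpa using this
    simp [restrictMap, LinearMap.restrict_apply, hx]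
  have hinj : Function.Injective
      (fun g : ↥(homBetween (range N) (ker N)) => (⟨⟨g.1, hmem g⟩, hker g⟩ : ↥(ker (restrictMap N)))) := by
    intro a b hab
    apply Subtype.ext
    exact congrArg (fun z : ↥(ker (restrictMap N)) => (z.1.1 : V →ₗ[ℂ] V)) hab
  have hlin : finrank ℂ ↥(homBetween (range N) (ker N)) ≤ finrank ℂ ↥(ker (restrictMap N)) := by
    refine LinearMap.finrank_le_finrank_of_injective
      (f := ⟨⟨fun g => ⟨⟨g.1, hmem g⟩, hker g⟩, fun a b => rfl⟩, fun c a => rfl⟩) hinj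
  have heq : finrank ℂ ↥(homBetween (range N) (ker N))
      = (finrank ℂ V - finrank ℂ ↥(range N)) * finrank ℂ ↥(ker N) :=
    finrank_homBetween _ _
  have hrn : finrank ℂ ↥(range N) + finrank ℂ ↥(ker N) = finrank ℂ V :=
    finrank_range_add_finrank_ker N
  have hkn : finrank ℂ ↥(ker N) = finrank ℂ V - finrank ℂ ↥(range N) := by omega
  rw [heq, hkn] at hlin
  rw [pow_two]
  exact hlin

lemma commS_le_range_restrictMap [FiniteDimensional ℂ V] (N : V →ₗ[ℂ] V) :
    commS (Nres N) ≤ range (restrictMap N) := by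
  intro M₁ hM₁
  obtain ⟨Q, hQ⟩ := Submodule.exists_isCompl (range N)
  set π := (range N).linearProjOfIsCompl Q hQ with hπdef
  obtain ⟨σ, hσ⟩ := N.rangeRestrict.exists_rightInverse_of_surjective
    (LinearMap.range_rangeRestrict N)
  have hσ' : ∀ u : ↥(range N), N.rangeRestrict (σ u) = u := by
    intro u; exact congrArg (fun f => f u) hσ
  have hπι : ∀ u : ↥(range N), π (u : V) = u := fun u =>
    Submodule.linearProjOfIsCompl_apply_left hQ u
  have hπN : ∀ x : V, π (N x) = N.rangeRestrict x := by
    intro x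
    have h0 : (⟨N x, ⟨x, rfl⟩⟩ : ↥(range N)) = N.rangeRestrict x := rfl
    rw [← h0]
    exact Submodule.linearProjOfIsCompl_apply_left hQ ⟨N x, ⟨x, rfl⟩⟩
  have hcomm : ∀ u : ↥(range N), Nres N (M₁ u) = M₁ (Nres N u) := by
    rw [mem_commS_iff] at hM₁; exact hM₁
  have hNres : ∀ u : ↥(range N), ((Nres N u : V)) = N (u : V) := fun u => rfl
  have hNrr : ∀ x : V, ((N.rangeRestrict x : V)) = N x := fun x => rfl
  set M : V →ₗ[ℂ] V :=
    (range N).subtype ∘ₗ M₁ ∘ₗ π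
      + σ ∘ₗ M₁ ∘ₗ N.rangeRestrict ∘ₗ (LinearMap.id - (range N).subtype ∘ₗ π) with hMdef
  have hMx : ∀ x : V, M x
      = ((M₁ (π x) : V)) + σ (M₁ (N.rangeRestrict (x - (π x : V)))) := by
    intro x
    simp only [hMdef, LinearMap.add_apply, LinearMap.comp_apply, LinearMap.sub_apply,
      LinearMap.id_apply, Submodule.coe_subtype]
  have hM_comm : M ∈ commS N := by
    rw [mem_commS_iff]
    intro x
    rw [hMx x, hMx (N x), hπN x]
    have e3 : N x - ((N.rangeRestrict x : V)) = 0 := by rw [hNrr]; exact sub_self _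
    rw [e3, _root_.map_zero, _root_.map_zero, _root_.map_zero, add_zero]
    rw [_root_.map_add]
    have e4 : N (σ (M₁ (N.rangeRestrict (x - (π x : V)))))
        = ((M₁ (N.rangeRestrict (x - (π x : V))) : V)) := by
      rw [← hNrr (σ _), hσ']
    have e5 : N ((M₁ (π x) : V)) = ((M₁ (Nres N (π x)) : V)) := by
      rw [← hNres, hcomm]
    rw [e4, e5]
    have e6 : Nres N (π x) + N.rangeRestrict (x - (π x : V)) = N.rangeRestrict x := by
      apply Subtype.ext
      rw [Submodule.coe_add, hNres, hNrr, hNrr, _root_.map_sub]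
      abel
    rw [← Submodule.coe_add, ← _root_.map_add, e6]
  refine ⟨⟨M, hM_comm⟩, ?_⟩
  refine LinearMap.ext fun u => ?_
  apply Subtype.ext
  show M (u : V) = (M₁ u : V)
  rw [hMx (u : V), hπι u, sub_self]
  simp only [_root_.map_zero, add_zero]

/-- The key restriction inequality. -/
lemma lemC_restrict [FiniteDimensional ℂ V] (N : V →ₗ[ℂ] V) :
    (finrank ℂ V - finrank ℂ ↥(range N)) ^ 2 + finrank ℂ ↥(commS (Nres N))
      ≤ finrank ℂ ↥(commS N) := by
  have hrn : finrank ℂ ↥(range (restrictMap N)) + finrank ℂ ↥(ker (restrictMap N))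
      = finrank ℂ ↥(commS N) := finrank_range_add_finrank_ker (restrictMap N)
  have h1 := finrank_ker_restrictMap_ge N
  have h2 : finrank ℂ ↥(commS (Nres N)) ≤ finrank ℂ ↥(range (restrictMap N)) :=
    Submodule.finrank_mono (commS_le_range_restrictMap N)
  omega

lemma commS_sub_smul_id (N : V →ₗ[ℂ] V) (lam : ℂ) :
    commS (N - lam • LinearMap.id) = commS N := by
  ext M
  rw [mem_commS_iff, mem_commS_iff]
  constructor
  · intro h x
    have h2 := h x
    simp only [LinearMap.sub_apply, LinearMap.smul_apply, LinearMap.id_apply, _root_.map_sub,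
      _root_.map_smul] at h2
    exact sub_left_inj.mp h2
  · intro h x
    simp only [LinearMap.sub_apply, LinearMap.smul_apply, LinearMap.id_apply, _root_.map_sub,
      _root_.map_smul]
    rw [h x]

universe u

/-- dim of commutant is at least `(dim V - rank)² + rank`. -/
lemma lemC : ∀ (d : ℕ) (V : Type u) (_ : AddCommGroup V) (_ : Module ℂ V)
    (_ : FiniteDimensional ℂ V), finrank ℂ V ≤ d → ∀ N : V →ₗ[ℂ] V,
    (finrank ℂ V - finrank ℂ ↥(range N)) ^ 2 + finrank ℂ ↥(range N)
      ≤ finrank ℂ ↥(commS N) := by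
  intro d
  induction d with
  | zero =>
    intro V iag imod ifd hV N
    have h1 : finrank ℂ ↥(range N) ≤ finrank ℂ V := N.finrank_range_le
    have h2 : finrank ℂ V = 0 := by omega
    have h3 : finrank ℂ ↥(range N) = 0 := by omega
    rw [h2, h3]
    simp
  | succ d IH =>
    intro V iag imod ifd hV N
    by_cases hge : finrank ℂ V ≤ d
    · exact IH V iag imod ifd hge N
    have ht_le : finrank ℂ ↥(range N) ≤ finrank ℂ V := N.finrank_range_le
    by_cases hlt : finrank ℂ ↥(range N) < finrank ℂ V
    · -- restriction case
      have h1 := lemC_restrict N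
      have h2 := IH ↥(range N) inferInstance inferInstance inferInstance (by omega) (Nres N)
      have ht₁ : finrank ℂ ↥(range (Nres N)) ≤ finrank ℂ ↥(range N) :=
        (Nres N).finrank_range_le
      have hsq : finrank ℂ ↥(range N) - finrank ℂ ↥(range (Nres N))
          ≤ (finrank ℂ ↥(range N) - finrank ℂ ↥(range (Nres N))) ^ 2 :=
        Nat.le_self_pow (by norm_num) _
      omega
    · -- N surjective case
      have hteq : finrank ℂ ↥(range N) = finrank ℂ V := by omega
      have hpos : 0 < finrank ℂ V := by omega
      haveI : Nontrivial V := Module.nontrivial_of_finrank_pos hpos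
      obtain ⟨lam, hlam⟩ := Module.End.exists_eigenvalue (N : Module.End ℂ V)
      obtain ⟨v, hv⟩ := hlam.exists_hasEigenvector
      set N' := N - lam • LinearMap.id with hN'def
      have hvker : v ∈ ker N' := by
        simp only [hN'def, mem_ker, LinearMap.sub_apply, LinearMap.smul_apply,
          LinearMap.id_apply]
        rw [hv.apply_eq_smul]
        exact sub_self _
      have hkerpos : 0 < finrank ℂ ↥(ker N') := by
        have : v ≠ 0 := hv.2
        have hne : ker N' ≠ ⊥ := by
          intro hbot
          rw [hbot] at hvker
          simp only [Submodule.mem_bot] at hvker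
          exact this hvker
        rcases Nat.eq_zero_or_pos (finrank ℂ ↥(ker N')) with h0 | h
        · exfalso
          exact hne (Submodule.finrank_eq_zero.mp h0)
        · exact h
      have hrnN' : finrank ℂ ↥(range N') + finrank ℂ ↥(ker N') = finrank ℂ V :=
        finrank_range_add_finrank_ker N'
      have hlt' : finrank ℂ ↥(range N') < finrank ℂ V := by omega
      have h1 := lemC_restrict N'
      have h2 := IH ↥(range N') inferInstance inferInstance inferInstance (by omega) (Nres N')
      have ht₁ : finrank ℂ ↥(range (Nres N')) ≤ finrank ℂ ↥(range N') :=
        (Nres N').finrank_range_le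
      have hsq : finrank ℂ ↥(range N') - finrank ℂ ↥(range (Nres N'))
          ≤ (finrank ℂ ↥(range N') - finrank ℂ ↥(range (Nres N'))) ^ 2 :=
        Nat.le_self_pow (by norm_num) _
      have hsq2 : finrank ℂ V - finrank ℂ ↥(range N')
          ≤ (finrank ℂ V - finrank ℂ ↥(range N')) ^ 2 :=
        Nat.le_self_pow (by norm_num) _
      have hcs : finrank ℂ ↥(commS N') = finrank ℂ ↥(commS N) := by
        rw [hN'def, commS_sub_smul_id]
      have hj : (finrank ℂ V - finrank ℂ ↥(range N)) ^ 2 = 0 := by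
        rw [hteq]
        simp
      omega

end LemC
section Aux

variable {A B C : Type*} [AddCommGroup A] [Module ℂ A] [AddCommGroup B] [Module ℂ B]
  [AddCommGroup C] [Module ℂ C]

lemma finrank_comap_le [FiniteDimensional ℂ A] [FiniteDimensional ℂ B]
    (f : A →ₗ[ℂ] B) (S : Submodule ℂ B) :
    finrank ℂ ↥(Submodule.comap f S) ≤ finrank ℂ ↥(ker f) + finrank ℂ ↥S := by
  set φ := f.restrict (p := Submodule.comap f S) (q := S) (fun x hx => hx) with hφ
  have hrn : finrank ℂ ↥(range φ) + finrank ℂ ↥(ker φ)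
      = finrank ℂ ↥(Submodule.comap f S) := finrank_range_add_finrank_ker φ
  have h1 : finrank ℂ ↥(range φ) ≤ finrank ℂ ↥S := Submodule.finrank_le _
  have h2 : finrank ℂ ↥(ker φ) ≤ finrank ℂ ↥(ker f) := by
    have hmem : ∀ x : ↥(ker φ),
        ((Submodule.comap f S).subtype ∘ₗ (ker φ).subtype) x ∈ ker f := by
      intro x
      have hx : φ x.1 = 0 := x.2
      have h3 : ((φ x.1 : ↥S) : B) = 0 := by rw [hx]; rfl
      simp only [LinearMap.mem_ker, LinearMap.coe_comp, Function.comp_apply,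
        Submodule.coe_subtype]
      exact h3
    refine LinearMap.finrank_le_finrank_of_injective
      (f := LinearMap.codRestrict (ker f) _ hmem) ?_
    intro a b hab
    have h4 := congrArg (fun z : ↥(ker f) => (z : A)) hab
    simp only [LinearMap.codRestrict_apply, LinearMap.coe_comp, Function.comp_apply,
      Submodule.coe_subtype] at h4
    exact Subtype.ext (Subtype.ext h4)
  omega

lemma nat_arith (m k r s t : ℕ) (h1 : t ≤ r) (h2 : t ≤ s) (h3 : r ≤ m) (h4 : s ≤ m)
    (h5 : m ≤ k) :
    m ≤ (m - r) * (k - r) + (m - s) * (k - s) + t + (r - t) * (s - t) := by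
  have hA : m - r ≤ (m - r) * (k - r) := by
    by_cases hr : r < k
    · calc m - r = (m - r) * 1 := (Nat.mul_one _).symm
        _ ≤ (m - r) * (k - r) := Nat.mul_le_mul_left _ (by omega)
    · have : m - r = 0 := by omega
      simp [this]
  have hB : m - s ≤ (m - s) * (k - s) := by
    by_cases hs : s < k
    · calc m - s = (m - s) * 1 := (Nat.mul_one _).symm
        _ ≤ (m - s) * (k - s) := Nat.mul_le_mul_left _ (by omega)
    · have : m - s = 0 := by omega
      simp [this]
  by_cases hu : r = t
  · subst hu
    simp only [Nat.sub_self, Nat.zero_mul]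
    omega
  by_cases hv : s = t
  · subst hv
    simp only [Nat.sub_self, Nat.mul_zero]
    omega
  have hu1 : t + 1 ≤ r := by omega
  have hv1 : t + 1 ≤ s := by omega
  obtain ⟨a, ha⟩ : ∃ a, r - t = a + 1 := ⟨r - t - 1, by omega⟩
  obtain ⟨b, hb⟩ : ∃ b, s - t = b + 1 := ⟨s - t - 1, by omega⟩
  have key : (r - t) * (s - t) = a * b + a + b + 1 := by rw [ha, hb]; ring
  omega

end Aux
section MapLand

variable {U V : Type*} [AddCommGroup U] [Module ℂ U] [AddCommGroup V] [Module ℂ V]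

/-- Pairs `(p, q)` intertwining `(b, c)` with the swapped pair. -/
def Wsub (b : U →ₗ[ℂ] V) (c : V →ₗ[ℂ] U) :
    Submodule ℂ ((V →ₗ[ℂ] U) × (U →ₗ[ℂ] V)) where
  carrier := {pq | b ∘ₗ pq.1 = pq.2 ∘ₗ c ∧ pq.1 ∘ₗ b = c ∘ₗ pq.2}
  zero_mem' := by
    constructor <;> (refine LinearMap.ext fun z => ?_; simp)
  add_mem' := by
    rintro x y ⟨hx1, hx2⟩ ⟨hy1, hy2⟩
    constructor
    · refine LinearMap.ext fun z => ?_
      have e1 := congrArg (fun f => f z) hx1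
      have e2 := congrArg (fun f => f z) hy1
      simp only [LinearMap.comp_apply] at e1 e2 ⊢
      simp only [Prod.fst_add, Prod.snd_add, LinearMap.add_apply, _root_.map_add, e1, e2]
    · refine LinearMap.ext fun z => ?_
      have e1 := congrArg (fun f => f z) hx2
      have e2 := congrArg (fun f => f z) hy2
      simp only [LinearMap.comp_apply] at e1 e2 ⊢
      simp only [Prod.fst_add, Prod.snd_add, LinearMap.add_apply, _root_.map_add, e1, e2]
  smul_mem' := by
    rintro a x ⟨hx1, hx2⟩
    constructor
    · refine LinearMap.ext fun z => ?_
      have e1 := congrArg (fun f => f z) hx1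
      simp only [LinearMap.comp_apply] at e1 ⊢
      simp only [Prod.smul_fst, Prod.smul_snd, LinearMap.smul_apply, _root_.map_smul, e1]
    · refine LinearMap.ext fun z => ?_
      have e1 := congrArg (fun f => f z) hx2
      simp only [LinearMap.comp_apply] at e1 ⊢
      simp only [Prod.smul_fst, Prod.smul_snd, LinearMap.smul_apply, _root_.map_smul, e1]

/-- `ν = b ∘ c`. -/
noncomputable def nuM (b : U →ₗ[ℂ] V) (c : V →ₗ[ℂ] U) : V →ₗ[ℂ] V := b ∘ₗ c

noncomputable def psi1 (b : U →ₗ[ℂ] V) (c : V →ₗ[ℂ] U) :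
    ↥(commS (nuM b c)) →ₗ[ℂ] (V →ₗ[ℂ] V) :=
  (LinearMap.llcomp ℂ V V V (nuM b c)).comp (commS (nuM b c)).subtype

noncomputable def psi2 (b : U →ₗ[ℂ] V) (c : V →ₗ[ℂ] U) :
    ↥(commS (nuM b c)) →ₗ[ℂ] (U →ₗ[ℂ] U) :=
  (conjMap b c).comp (commS (nuM b c)).subtype

noncomputable def chiM (b : U →ₗ[ℂ] V) (c : V →ₗ[ℂ] U) :
    ↥(ker (psi1 b c)) →ₗ[ℂ] (U →ₗ[ℂ] U) :=
  (psi2 b c).comp (ker (psi1 b c)).subtype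

lemma psi1_apply (b : U →ₗ[ℂ] V) (c : V →ₗ[ℂ] U) (x : ↥(commS (nuM b c))) :
    psi1 b c x = nuM b c ∘ₗ x.1 := rfl

lemma psi2_apply (b : U →ₗ[ℂ] V) (c : V →ₗ[ℂ] U) (x : ↥(commS (nuM b c))) :
    psi2 b c x = c ∘ₗ x.1 ∘ₗ b := rfl

/-- rank splitting: `dim A = rank f + rank (g|ker f) + dim ker (f.prod g)`. -/
lemma rank_split {A B C : Type*} [AddCommGroup A] [Module ℂ A] [AddCommGroup B] [Module ℂ B]
    [AddCommGroup C] [Module ℂ C] [FiniteDimensional ℂ A] (f : A →ₗ[ℂ] B) (g : A →ₗ[ℂ] C) :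
    finrank ℂ A = finrank ℂ ↥(range f)
      + finrank ℂ ↥(range (g.comp (ker f).subtype)) + finrank ℂ ↥(ker (f.prod g)) := by
  have h1 : finrank ℂ ↥(range f) + finrank ℂ ↥(ker f) = finrank ℂ A :=
    finrank_range_add_finrank_ker f
  have h2 : finrank ℂ ↥(range (g.comp (ker f).subtype))
      + finrank ℂ ↥(ker (g.comp (ker f).subtype)) = finrank ℂ ↥(ker f) :=
    finrank_range_add_finrank_ker _
  have h3 : ker (g.comp (ker f).subtype)
      = Submodule.comap (ker f).subtype (ker f ⊓ ker g) := by
    rw [LinearMap.ker_comp]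
    ext z
    simp only [Submodule.mem_comap, Submodule.mem_inf, Submodule.coe_subtype]
    exact ⟨fun h => ⟨z.2, h⟩, fun h => h.2⟩
  have h4 : finrank ℂ ↥(Submodule.comap (ker f).subtype (ker f ⊓ ker g))
      = finrank ℂ ↥(ker f ⊓ ker g) :=
    LinearEquiv.finrank_eq (R := ℂ) (Submodule.comapSubtypeEquivOfLe inf_le_left)
  have h5 : ker (f.prod g) = ker f ⊓ ker g := LinearMap.ker_prod f g
  rw [h5]
  rw [h3, h4] at h2
  omega

lemma ker_psi1_small [FiniteDimensional ℂ U] [FiniteDimensional ℂ V]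
    (b : U →ₗ[ℂ] V) (c : V →ₗ[ℂ] U) :
    finrank ℂ ↥(ker (psi1 b c))
      ≤ (finrank ℂ V - finrank ℂ ↥(range (nuM b c)))
        * (finrank ℂ V - finrank ℂ ↥(range (nuM b c))) := by
  have hmem : ∀ x : ↥(ker (psi1 b c)),
      ((commS (nuM b c)).subtype ∘ₗ (ker (psi1 b c)).subtype) x
        ∈ homBetween (range (nuM b c)) (ker (nuM b c)) := by
    intro x
    have hx : psi1 b c x.1 = 0 := x.2
    rw [psi1_apply] at hx
    have hcm : nuM b c ∘ₗ (x.1.1 : V →ₗ[ℂ] V) = x.1.1 ∘ₗ nuM b c := x.1.2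
    constructor
    · rintro z ⟨y, rfl⟩
      have h1 := congrArg (fun f => f y) hcm
      simp only [LinearMap.comp_apply] at h1
      have h2 := congrArg (fun f => f y) hx
      simp only [LinearMap.comp_apply, LinearMap.zero_apply] at h2
      simp only [mem_ker, LinearMap.coe_comp, Function.comp_apply, Submodule.coe_subtype]
      rw [← h1]
      exact h2
    · rintro z ⟨y, rfl⟩
      have h2 := congrArg (fun f => f y) hx
      simp only [LinearMap.comp_apply, LinearMap.zero_apply] at h2
      simpa using h2
  have hle : finrank ℂ ↥(ker (psi1 b c))
      ≤ finrank ℂ ↥(homBetween (range (nuM b c)) (ker (nuM b c))) := by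
    refine LinearMap.finrank_le_finrank_of_injective
      (f := LinearMap.codRestrict _ _ hmem) ?_
    intro a a' haa
    have h4 := congrArg
      (fun z : ↥(homBetween (range (nuM b c)) (ker (nuM b c))) => (z : V →ₗ[ℂ] V)) haa
    simp only [LinearMap.codRestrict_apply, LinearMap.coe_comp, Function.comp_apply,
      Submodule.coe_subtype] at h4
    exact Subtype.ext (Subtype.ext h4)
  have heq : finrank ℂ ↥(homBetween (range (nuM b c)) (ker (nuM b c)))
      = (finrank ℂ V - finrank ℂ ↥(range (nuM b c))) * finrank ℂ ↥(ker (nuM b c)) :=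
    finrank_homBetween _ _
  have hrn : finrank ℂ ↥(range (nuM b c)) + finrank ℂ ↥(ker (nuM b c)) = finrank ℂ V :=
    finrank_range_add_finrank_ker _
  have hkν : finrank ℂ ↥(ker (nuM b c)) = finrank ℂ V - finrank ℂ ↥(range (nuM b c)) := by
    omega
  rw [heq, hkν] at hle
  exact hle

lemma rank_chi_ge [FiniteDimensional ℂ U] [FiniteDimensional ℂ V]
    (b : U →ₗ[ℂ] V) (c : V →ₗ[ℂ] U) :
    (finrank ℂ ↥(range b) - finrank ℂ ↥(range (nuM b c)))
      * (finrank ℂ ↥(range c) - finrank ℂ ↥(range (nuM b c)))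
      ≤ finrank ℂ ↥(range (chiM b c)) := by
  set ν := nuM b c with hν
  set b' : U →ₗ[ℂ] (V ⧸ range ν) := (range ν).mkQ ∘ₗ b with hb'
  set c' : ↥(ker ν) →ₗ[ℂ] U := c ∘ₗ (ker ν).subtype with hc'
  have hrnν : finrank ℂ ↥(range ν) + finrank ℂ ↥(ker ν) = finrank ℂ V :=
    finrank_range_add_finrank_ker ν
  have hrnb : finrank ℂ ↥(range b) + finrank ℂ ↥(ker b) = finrank ℂ U :=
    finrank_range_add_finrank_ker b
  have hrnc : finrank ℂ ↥(range c) + finrank ℂ ↥(ker c) = finrank ℂ V :=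
    finrank_range_add_finrank_ker c
  have hrb' : finrank ℂ ↥(range b) - finrank ℂ ↥(range ν) ≤ finrank ℂ ↥(range b') := by
    have h1 : finrank ℂ ↥(range b') + finrank ℂ ↥(ker b') = finrank ℂ U :=
      finrank_range_add_finrank_ker b'
    have h2 : ker b' = Submodule.comap b (range ν) := by
      rw [hb', LinearMap.ker_comp, Submodule.ker_mkQ]
    have h3 : finrank ℂ ↥(Submodule.comap b (range ν))
        ≤ finrank ℂ ↥(ker b) + finrank ℂ ↥(range ν) := finrank_comap_le b (range ν)
    rw [h2] at h1
    omega
  have hrc' : finrank ℂ ↥(range c) - finrank ℂ ↥(range ν) ≤ finrank ℂ ↥(range c') := by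
    have h1 : finrank ℂ ↥(range c') + finrank ℂ ↥(ker c') = finrank ℂ ↥(ker ν) :=
      finrank_range_add_finrank_ker c'
    have h2 : ker c' = Submodule.comap (ker ν).subtype (ker c) := LinearMap.ker_comp _ _
    have h3 : finrank ℂ ↥(Submodule.comap (ker ν).subtype (ker c))
        ≤ finrank ℂ ↥(ker (ker ν).subtype) + finrank ℂ ↥(ker c) :=
      finrank_comap_le (ker ν).subtype (ker c)
    have h4 : finrank ℂ ↥(ker (ker ν).subtype) = 0 := by
      rw [Submodule.ker_subtype]
      exact finrank_bot ℂ _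
    rw [h2] at h1
    omega
  -- the map ξ into ker (psi1)
  have hmemCS : ∀ Mb : (V ⧸ range ν) →ₗ[ℂ] ↥(ker ν),
      homBetweenMap (range ν) (ker ν) Mb ∈ commS ν := by
    intro Mb
    rw [mem_commS_iff]
    intro x
    have h1 : homBetweenMap (range ν) (ker ν) Mb x = (Mb ((range ν).mkQ x) : V) := rfl
    have h2 : ν ((Mb ((range ν).mkQ x) : V)) = 0 := by
      have := (Mb ((range ν).mkQ x)).2
      simpa using this
    have h3 : (range ν).mkQ (ν x) = 0 := by
      simp only [Submodule.mkQ_apply, Submodule.Quotient.mk_eq_zero]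
      exact ⟨x, rfl⟩
    rw [h1, h2]
    have h4 : homBetweenMap (range ν) (ker ν) Mb (ν x) = (Mb ((range ν).mkQ (ν x)) : V) := rfl
    rw [h4, h3]
    simp
  have hkerξ : ∀ Mb, LinearMap.codRestrict (commS ν) (homBetweenMap (range ν) (ker ν))
      hmemCS Mb ∈ ker (psi1 b c) := by
    intro Mb
    simp only [mem_ker]
    rw [psi1_apply]
    refine LinearMap.ext fun x => ?_
    have h1 : (LinearMap.codRestrict (commS ν) (homBetweenMap (range ν) (ker ν)) hmemCS Mb).1 x
        = (Mb ((range ν).mkQ x) : V) := rfl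
    simp only [LinearMap.comp_apply, LinearMap.zero_apply, h1]
    have := (Mb ((range ν).mkQ x)).2
    simpa using this
  set ξ : ((V ⧸ range ν) →ₗ[ℂ] ↥(ker ν)) →ₗ[ℂ] ↥(ker (psi1 b c)) :=
    LinearMap.codRestrict (ker (psi1 b c))
      (LinearMap.codRestrict (commS ν) (homBetweenMap (range ν) (ker ν)) hmemCS) hkerξ with hξ
  have hχξ : chiM b c ∘ₗ ξ = conjMap b' c' := by
    refine LinearMap.ext fun Mb => LinearMap.ext fun u => ?_
    rfl
  calc (finrank ℂ ↥(range b) - finrank ℂ ↥(range ν))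
      * (finrank ℂ ↥(range c) - finrank ℂ ↥(range ν))
      ≤ finrank ℂ ↥(range b') * finrank ℂ ↥(range c') := Nat.mul_le_mul hrb' hrc'
    _ ≤ finrank ℂ ↥(range (conjMap b' c')) := rank_conjMap_ge b' c'
    _ = finrank ℂ ↥(range (chiM b c ∘ₗ ξ)) := by rw [hχξ]
    _ ≤ finrank ℂ ↥(range (chiM b c)) :=
        Submodule.finrank_mono (LinearMap.range_comp_le_range ξ (chiM b c))

end MapLand
section MainMapLand

variable {U V : Type*} [AddCommGroup U] [Module ℂ U] [AddCommGroup V] [Module ℂ V]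

noncomputable def PhiM (b : U →ₗ[ℂ] V) (c : V →ₗ[ℂ] U) :
    (↥(homBetween (range b) (ker b)) × ↥(homBetween (range c) (ker c))
      × ↥(commS (nuM b c))) →ₗ[ℂ] ((V →ₗ[ℂ] U) × (U →ₗ[ℂ] V)) :=
  ((homBetween (range b) (ker b)).subtype.comp
      (LinearMap.fst ℂ _ (↥(homBetween (range c) (ker c)) × ↥(commS (nuM b c))))
    + (LinearMap.llcomp ℂ V V U c).comp ((commS (nuM b c)).subtype.comp
        ((LinearMap.snd ℂ ↥(homBetween (range c) (ker c)) ↥(commS (nuM b c))).comp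
          (LinearMap.snd ℂ ↥(homBetween (range b) (ker b)) _)))).prod
  ((homBetween (range c) (ker c)).subtype.comp
      ((LinearMap.fst ℂ ↥(homBetween (range c) (ker c)) ↥(commS (nuM b c))).comp
        (LinearMap.snd ℂ ↥(homBetween (range b) (ker b)) _))
    + (LinearMap.lcomp ℂ V b).comp ((commS (nuM b c)).subtype.comp
        ((LinearMap.snd ℂ ↥(homBetween (range c) (ker c)) ↥(commS (nuM b c))).comp
          (LinearMap.snd ℂ ↥(homBetween (range b) (ker b)) _))))

lemma PhiM_apply (b : U →ₗ[ℂ] V) (c : V →ₗ[ℂ] U)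
    (z : ↥(homBetween (range b) (ker b)) × ↥(homBetween (range c) (ker c))
      × ↥(commS (nuM b c))) :
    PhiM b c z = (z.1.1 + c ∘ₗ z.2.2.1, z.2.1.1 + z.2.2.1 ∘ₗ b) := rfl

lemma range_PhiM_le (b : U →ₗ[ℂ] V) (c : V →ₗ[ℂ] U) :
    range (PhiM b c) ≤ Wsub b c := by
  rintro w ⟨z, rfl⟩
  obtain ⟨⟨p, hp1, hp2⟩, ⟨q, hq1, hq2⟩, ⟨M, hM⟩⟩ := z
  rw [PhiM_apply]
  have hMc : ∀ x, nuM b c (M x) = M (nuM b c x) := by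
    rw [mem_commS_iff] at hM
    exact hM
  constructor
  · refine LinearMap.ext fun x => ?_
    have e1 : b (p x) = 0 := by
      have := hp2 ⟨x, rfl⟩
      simpa using this
    have e2 : q (c x) = 0 := by
      have := hq1 (⟨x, rfl⟩ : c x ∈ range c)
      simpa using this
    have e3 := hMc x
    simp only [nuM, LinearMap.comp_apply] at e3
    simp only [LinearMap.comp_apply, LinearMap.add_apply, _root_.map_add]
    rw [e1, e2, e3]
  · refine LinearMap.ext fun y => ?_
    have e1 : p (b y) = 0 := by
      have := hp1 (⟨y, rfl⟩ : b y ∈ range b)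
      simpa using this
    have e2 : c (q y) = 0 := by
      have := hq2 ⟨y, rfl⟩
      simpa using this
    simp only [LinearMap.comp_apply, LinearMap.add_apply, _root_.map_add]
    rw [e1, e2]

lemma ker_PhiM_le [FiniteDimensional ℂ U] [FiniteDimensional ℂ V]
    (b : U →ₗ[ℂ] V) (c : V →ₗ[ℂ] U) :
    finrank ℂ ↥(ker (PhiM b c)) ≤ finrank ℂ ↥(ker ((psi1 b c).prod (psi2 b c))) := by
  set pr3 : (↥(homBetween (range b) (ker b)) × ↥(homBetween (range c) (ker c))
      × ↥(commS (nuM b c))) →ₗ[ℂ] ↥(commS (nuM b c)) :=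
    (LinearMap.snd ℂ ↥(homBetween (range c) (ker c)) ↥(commS (nuM b c))).comp
      (LinearMap.snd ℂ ↥(homBetween (range b) (ker b)) _) with hpr3
  have hmem : ∀ x : ↥(ker (PhiM b c)),
      (pr3.comp (ker (PhiM b c)).subtype) x ∈ ker ((psi1 b c).prod (psi2 b c)) := by
    intro x
    have hx : PhiM b c x.1 = 0 := x.2
    rw [PhiM_apply] at hx
    have hx1 : x.1.1.1 + c ∘ₗ x.1.2.2.1 = 0 := congrArg Prod.fst hx
    have hx2 : x.1.2.1.1 + x.1.2.2.1 ∘ₗ b = 0 := congrArg Prod.snd hx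
    simp only [mem_ker, LinearMap.prod_apply, Pi.prod, LinearMap.coe_comp,
      Function.comp_apply, Submodule.coe_subtype]
    have hz1 : psi1 b c (x.1.2.2) = 0 := by
      rw [psi1_apply]
      have hcM : c ∘ₗ x.1.2.2.1 = -x.1.1.1 := eq_neg_of_add_eq_zero_right hx1
      have hsplit : (nuM b c) ∘ₗ (x.1.2.2.1 : V →ₗ[ℂ] V) = b ∘ₗ (c ∘ₗ x.1.2.2.1) := rfl
      rw [hsplit, hcM]
      refine LinearMap.ext fun x' => ?_
      simp only [LinearMap.comp_apply, LinearMap.neg_apply, _root_.map_neg, LinearMap.zero_apply]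
      have hbp : b (x.1.1.1 x') = 0 := by
        have := x.1.1.2.2 ⟨x', rfl⟩
        simpa using this
      rw [hbp]
      simp
    have hz2 : psi2 b c (x.1.2.2) = 0 := by
      rw [psi2_apply]
      have hMb : x.1.2.2.1 ∘ₗ b = -x.1.2.1.1 := eq_neg_of_add_eq_zero_right hx2
      rw [hMb]
      refine LinearMap.ext fun y' => ?_
      simp only [LinearMap.comp_apply, LinearMap.neg_apply, _root_.map_neg, LinearMap.zero_apply]
      have hcq : c (x.1.2.1.1 y') = 0 := by
        have := x.1.2.1.2.2 ⟨y', rfl⟩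
        simpa using this
      rw [hcq]
      simp
    have hpr : pr3 x.1 = x.1.2.2 := rfl
    rw [hpr]
    show (psi1 b c x.1.2.2, psi2 b c x.1.2.2) = 0
    rw [hz1, hz2]
    rfl
  refine LinearMap.finrank_le_finrank_of_injective
    (f := LinearMap.codRestrict _ _ hmem) ?_
  intro x y hxy
  have h4 := congrArg (fun z : ↥(ker ((psi1 b c).prod (psi2 b c)))
    => (z : ↥(commS (nuM b c)))) hxy
  simp only [LinearMap.codRestrict_apply, LinearMap.coe_comp, Function.comp_apply,
    Submodule.coe_subtype] at h4
  have hM : x.1.2.2 = y.1.2.2 := h4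
  have hx : PhiM b c x.1 = 0 := x.2
  have hy : PhiM b c y.1 = 0 := y.2
  rw [PhiM_apply] at hx hy
  have hx1 : x.1.1.1 + c ∘ₗ x.1.2.2.1 = 0 := congrArg Prod.fst hx
  have hy1 : y.1.1.1 + c ∘ₗ y.1.2.2.1 = 0 := congrArg Prod.fst hy
  have hx2 : x.1.2.1.1 + x.1.2.2.1 ∘ₗ b = 0 := congrArg Prod.snd hx
  have hy2 : y.1.2.1.1 + y.1.2.2.1 ∘ₗ b = 0 := congrArg Prod.snd hy
  have hp : x.1.1.1 = y.1.1.1 := by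
    have ex : x.1.1.1 = -(c ∘ₗ x.1.2.2.1) := eq_neg_of_add_eq_zero_left hx1
    have ey : y.1.1.1 = -(c ∘ₗ y.1.2.2.1) := eq_neg_of_add_eq_zero_left hy1
    rw [ex, ey, hM]
  have hq : x.1.2.1.1 = y.1.2.1.1 := by
    have ex : x.1.2.1.1 = -(x.1.2.2.1 ∘ₗ b) := eq_neg_of_add_eq_zero_left hx2
    have ey : y.1.2.1.1 = -(y.1.2.2.1 ∘ₗ b) := eq_neg_of_add_eq_zero_left hy2
    rw [ex, ey, hM]
  apply Subtype.ext
  exact Prod.ext (Subtype.ext hp) (Prod.ext (Subtype.ext hq) hM)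

set_option maxHeartbeats 1000000 in
lemma finrank_Wsub_ge [FiniteDimensional ℂ U] [FiniteDimensional ℂ V]
    (b : U →ₗ[ℂ] V) (c : V →ₗ[ℂ] U) (hmk : finrank ℂ V ≤ finrank ℂ U) :
    finrank ℂ V ≤ finrank ℂ ↥(Wsub b c) := by
  have htr : finrank ℂ ↥(range (nuM b c)) ≤ finrank ℂ ↥(range b) :=
    Submodule.finrank_mono (LinearMap.range_comp_le_range c b)
  have hts : finrank ℂ ↥(range (nuM b c)) ≤ finrank ℂ ↥(range c) := by
    have h0 : range (nuM b c) = Submodule.map b (range c) := LinearMap.range_comp c b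
    rw [h0]
    exact Submodule.finrank_map_le b (range c)
  have hrm : finrank ℂ ↥(range b) ≤ finrank ℂ V := Submodule.finrank_le _
  have hsm : finrank ℂ ↥(range c) ≤ finrank ℂ V := LinearMap.finrank_range_le c
  have hrnb : finrank ℂ ↥(range b) + finrank ℂ ↥(ker b) = finrank ℂ U :=
    finrank_range_add_finrank_ker b
  have hrnc : finrank ℂ ↥(range c) + finrank ℂ ↥(ker c) = finrank ℂ V :=
    finrank_range_add_finrank_ker c
  have hd1 : finrank ℂ ↥(homBetween (range b) (ker b))
      = (finrank ℂ V - finrank ℂ ↥(range b)) * finrank ℂ ↥(ker b) :=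
    finrank_homBetween _ _
  have hd2 : finrank ℂ ↥(homBetween (range c) (ker c))
      = (finrank ℂ U - finrank ℂ ↥(range c)) * finrank ℂ ↥(ker c) :=
    finrank_homBetween _ _
  have hkb : finrank ℂ ↥(ker b) = finrank ℂ U - finrank ℂ ↥(range b) := by omega
  have hkc : finrank ℂ ↥(ker c) = finrank ℂ V - finrank ℂ ↥(range c) := by omega
  rw [hkb] at hd1
  rw [hkc, Nat.mul_comm] at hd2
  -- commutant size
  have hCSbig : (finrank ℂ V - finrank ℂ ↥(range (nuM b c)))
      * (finrank ℂ V - finrank ℂ ↥(range (nuM b c)))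
      + finrank ℂ ↥(range (nuM b c)) ≤ finrank ℂ ↥(commS (nuM b c)) := by
    have := lemC (finrank ℂ V) V inferInstance inferInstance inferInstance le_rfl (nuM b c)
    rw [pow_two] at this
    exact this
  have hkerψ₁ := ker_psi1_small b c
  -- rank splitting for psi-prod
  have hsplit := rank_split (psi1 b c) (psi2 b c)
  have hrnψ₁ : finrank ℂ ↥(range (psi1 b c)) + finrank ℂ ↥(ker (psi1 b c))
      = finrank ℂ ↥(commS (nuM b c)) := finrank_range_add_finrank_ker _
  have hχ := rank_chi_ge b c
  -- Φ accounting
  have hrnΦ : finrank ℂ ↥(range (PhiM b c)) + finrank ℂ ↥(ker (PhiM b c))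
      = finrank ℂ (↥(homBetween (range b) (ker b)) × ↥(homBetween (range c) (ker c))
        × ↥(commS (nuM b c))) := finrank_range_add_finrank_ker _
  have hDdim : finrank ℂ (↥(homBetween (range b) (ker b))
        × ↥(homBetween (range c) (ker c)) × ↥(commS (nuM b c)))
      = finrank ℂ ↥(homBetween (range b) (ker b))
        + (finrank ℂ ↥(homBetween (range c) (ker c))
          + finrank ℂ ↥(commS (nuM b c))) := by
    rw [Module.finrank_prod, Module.finrank_prod]
  have hkerΦ := ker_PhiM_le b c
  have hWge : finrank ℂ ↥(range (PhiM b c)) ≤ finrank ℂ ↥(Wsub b c) :=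
    Submodule.finrank_mono (range_PhiM_le b c)
  -- chiM is the restricted map in rank_split
  have hchieq : range (chiM b c) = range ((psi2 b c).comp (ker (psi1 b c)).subtype) := rfl
  rw [← hchieq] at hsplit
  have harith := nat_arith (finrank ℂ V) (finrank ℂ U) (finrank ℂ ↥(range b))
    (finrank ℂ ↥(range c)) (finrank ℂ ↥(range (nuM b c))) htr hts hrm hsm hmk
  omega

end MainMapLand
section MatrixLand

open Matrix

lemma trace_mul_single {a b : Type*} [Fintype a] [DecidableEq a] [Fintype b] [DecidableEq b]
    (U : Matrix a b ℂ) (i : b) (j : a) :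
    Matrix.trace (U * Matrix.single i j (1 : ℂ)) = U j i := by
  simp [Matrix.trace, Matrix.diag, Matrix.mul_apply, Matrix.single,
    mul_ite, mul_one, mul_zero, ite_and]

lemma trace_fromBlocks' {a b : Type*} [Fintype a] [Fintype b]
    (A : Matrix a a ℂ) (B : Matrix a b ℂ) (C : Matrix b a ℂ) (D : Matrix b b ℂ) :
    Matrix.trace (Matrix.fromBlocks A B C D) = Matrix.trace A + Matrix.trace D := by
  rw [Matrix.trace, Matrix.trace, Matrix.trace]
  rw [Fintype.sum_sum_type]
  rfl

variable {m k : ℕ}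

lemma stdBasisMatrix_inl_mem_diagPair (i j : Fin m) :
    Matrix.single (Sum.inl i) (Sum.inl j) (1 : ℂ)
      ∈ (diagPair m k : Submodule ℂ _) := by
  constructor <;> intro i' j' <;>
    (rw [Matrix.single_apply_of_ne] ; simp)

lemma stdBasisMatrix_inr_mem_diagPair (i j : Fin k) :
    Matrix.single (Sum.inr i) (Sum.inr j) (1 : ℂ)
      ∈ (diagPair m k : Submodule ℂ _) := by
  constructor <;> intro i' j' <;>
    (rw [Matrix.single_apply_of_ne] ; simp)

lemma mem_diagPair_iff_eq_fromBlocks {Y : Matrix (Fin m ⊕ Fin k) (Fin m ⊕ Fin k) ℂ} :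
    Y ∈ (diagPair m k : Submodule ℂ _)
      ↔ Y = Matrix.fromBlocks Y.toBlocks₁₁ 0 0 Y.toBlocks₂₂ := by
  constructor
  · rintro ⟨h1, h2⟩
    ext a c
    cases a with
    | inl i => cases c with
      | inl j => rfl
      | inr j => simpa using h1 i j
    | inr i => cases c with
      | inl j => simpa using h2 i j
      | inr j => rfl
  · intro h
    constructor <;> intro i j <;> (conv_lhs => rw [h]) <;> rfl

lemma mem_perp_diagPair_iff {X : Matrix (Fin m ⊕ Fin k) (Fin m ⊕ Fin k) ℂ} :
    X ∈ perpOf (diagPair m k : Set _)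
      ↔ X = Matrix.fromBlocks 0 X.toBlocks₁₂ X.toBlocks₂₁ 0 := by
  constructor
  · intro h
    have h1 : ∀ i j : Fin m, X (Sum.inl j) (Sum.inl i) = 0 := by
      intro i j
      have := h _ (stdBasisMatrix_inl_mem_diagPair i j)
      rwa [_root_.trace_mul_single] at this
    have h2 : ∀ i j : Fin k, X (Sum.inr j) (Sum.inr i) = 0 := by
      intro i j
      have := h _ (stdBasisMatrix_inr_mem_diagPair i j)
      rwa [_root_.trace_mul_single] at this
    ext a c
    cases a with
    | inl i => cases c with
      | inl j => simpa using h1 j i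
      | inr j => rfl
    | inr i => cases c with
      | inl j => rfl
      | inr j => simpa using h2 j i
  · intro hX Y hY
    have hY' : Y = Matrix.fromBlocks Y.toBlocks₁₁ 0 0 Y.toBlocks₂₂ :=
      mem_diagPair_iff_eq_fromBlocks.mp hY
    rw [hX, hY', Matrix.fromBlocks_multiply]
    rw [trace_fromBlocks']
    simp

/-- The intertwining map `T(A, D) = (AB - BD, DC - CA)`. -/
noncomputable def Tmap (B : Matrix (Fin m) (Fin k) ℂ) (C : Matrix (Fin k) (Fin m) ℂ) :
    (Matrix (Fin m) (Fin m) ℂ × Matrix (Fin k) (Fin k) ℂ)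
      →ₗ[ℂ] (Matrix (Fin m) (Fin k) ℂ × Matrix (Fin k) (Fin m) ℂ) where
  toFun AD := (AD.1 * B - B * AD.2, AD.2 * C - C * AD.1)
  map_add' := by
    rintro ⟨A, D⟩ ⟨A', D'⟩
    simp only [Prod.fst_add, Prod.snd_add, Matrix.add_mul, Matrix.mul_add, Prod.mk_add_mk,
      Prod.mk.injEq]
    constructor <;> abel
  map_smul' := by
    rintro t ⟨A, D⟩
    simp only [Prod.smul_fst, Prod.smul_snd, Matrix.smul_mul, Matrix.mul_smul,
      RingHom.id_apply, Prod.smul_mk, Prod.mk.injEq]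
    constructor <;> rw [smul_sub]

/-- Assembling a block-diagonal matrix. -/
noncomputable def Gamma (m k : ℕ) :
    (Matrix (Fin m) (Fin m) ℂ × Matrix (Fin k) (Fin k) ℂ)
      →ₗ[ℂ] Matrix (Fin m ⊕ Fin k) (Fin m ⊕ Fin k) ℂ where
  toFun AD := Matrix.fromBlocks AD.1 0 0 AD.2
  map_add' := by
    rintro ⟨A, D⟩ ⟨A', D'⟩
    rw [Matrix.fromBlocks_add]
    simp
  map_smul' := by
    rintro t ⟨A, D⟩
    rw [Matrix.fromBlocks_smul]
    simp

lemma Gamma_injective : Function.Injective (Gamma m k) := by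
  intro x y hxy
  have h1 := congrArg Matrix.toBlocks₁₁ hxy
  have h2 := congrArg Matrix.toBlocks₂₂ hxy
  simp only [Gamma, LinearMap.coe_mk, AddHom.coe_mk, Matrix.toBlocks_fromBlocks₁₁,
    Matrix.toBlocks_fromBlocks₂₂] at h1 h2
  exact Prod.ext h1 h2

lemma bracket_fromBlocks (B : Matrix (Fin m) (Fin k) ℂ) (C : Matrix (Fin k) (Fin m) ℂ)
    (A : Matrix (Fin m) (Fin m) ℂ) (D : Matrix (Fin k) (Fin k) ℂ) :
    ⁅Matrix.fromBlocks A 0 0 D, Matrix.fromBlocks 0 B C 0⁆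
      = Matrix.fromBlocks 0 (A * B - B * D) (D * C - C * A) 0 := by
  rw [Ring.lie_def, Matrix.fromBlocks_multiply, Matrix.fromBlocks_multiply]
  ext a c
  cases a <;> cases c <;>
    simp [Matrix.sub_apply, Matrix.fromBlocks_apply₁₁, Matrix.fromBlocks_apply₁₂,
      Matrix.fromBlocks_apply₂₁, Matrix.fromBlocks_apply₂₂]

lemma map_kerT_eq_centIn (B : Matrix (Fin m) (Fin k) ℂ) (C : Matrix (Fin k) (Fin m) ℂ) :
    Submodule.map (Gamma m k) (ker (Tmap B C))
      = centIn (diagPair m k) (Matrix.fromBlocks 0 B C 0) := by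
  have hTapp : ∀ (A : Matrix (Fin m) (Fin m) ℂ) (D : Matrix (Fin k) (Fin k) ℂ),
      Tmap B C (A, D) = (A * B - B * D, D * C - C * A) := fun A D => rfl
  have hGapp : ∀ (A : Matrix (Fin m) (Fin m) ℂ) (D : Matrix (Fin k) (Fin k) ℂ),
      Gamma m k (A, D) = Matrix.fromBlocks A 0 0 D := fun A D => rfl
  ext Y
  simp only [Submodule.mem_map]
  constructor
  · rintro ⟨⟨A, D⟩, hAD, rfl⟩
    have hT : Tmap B C (A, D) = 0 := hAD
    rw [hTapp] at hT
    have h1 : A * B - B * D = 0 := congrArg Prod.fst hT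
    have h2 : D * C - C * A = 0 := congrArg Prod.snd hT
    rw [hGapp]
    change _ ∈ diagPair m k ∧ _
    constructor
    · exact ⟨fun i j => rfl, fun i j => rfl⟩
    · rw [bracket_fromBlocks, h1, h2]
      ext a c
      cases a <;> cases c <;>
        simp [Matrix.fromBlocks_apply₁₁, Matrix.fromBlocks_apply₁₂,
          Matrix.fromBlocks_apply₂₁, Matrix.fromBlocks_apply₂₂]
  · intro hYc
    obtain ⟨hY, hbr0⟩ : Y ∈ diagPair m k ∧ ⁅Y, Matrix.fromBlocks 0 B C 0⁆ = 0 := hYc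
    have hY' : Y = Matrix.fromBlocks Y.toBlocks₁₁ 0 0 Y.toBlocks₂₂ :=
      mem_diagPair_iff_eq_fromBlocks.mp hY
    refine ⟨(Y.toBlocks₁₁, Y.toBlocks₂₂), ?_, by rw [hGapp, ← hY']⟩
    have h0 : ⁅Y, Matrix.fromBlocks 0 B C 0⁆ = 0 := hbr0
    conv_lhs at h0 => rw [hY']
    rw [bracket_fromBlocks] at h0
    have e12 : Y.toBlocks₁₁ * B - B * Y.toBlocks₂₂ = 0 := by
      ext i j
      have := congrArg (fun M : Matrix (Fin m ⊕ Fin k) (Fin m ⊕ Fin k) ℂ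
        => M (Sum.inl i) (Sum.inr j)) h0
      simpa [Matrix.fromBlocks_apply₁₂] using this
    have e21 : Y.toBlocks₂₂ * C - C * Y.toBlocks₁₁ = 0 := by
      ext i j
      have := congrArg (fun M : Matrix (Fin m ⊕ Fin k) (Fin m ⊕ Fin k) ℂ
        => M (Sum.inr i) (Sum.inl j)) h0
      simpa [Matrix.fromBlocks_apply₂₁] using this
    show Tmap B C (Y.toBlocks₁₁, Y.toBlocks₂₂) = 0
    rw [hTapp, e12, e21]
    rfl

lemma finrank_centIn_eq (B : Matrix (Fin m) (Fin k) ℂ) (C : Matrix (Fin k) (Fin m) ℂ) :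
    finrank ℂ ↥(centIn (diagPair m k) (Matrix.fromBlocks 0 B C 0))
      = finrank ℂ ↥(ker (Tmap B C)) := by
  rw [← map_kerT_eq_centIn]
  exact (LinearEquiv.finrank_eq
    (Submodule.equivMapOfInjective _ Gamma_injective (ker (Tmap B C)))).symm

end MatrixLand
section Duality

variable {m k : ℕ}

/-- Matrix version of the intertwiner space `W`. -/
noncomputable def Wmat (B : Matrix (Fin m) (Fin k) ℂ) (C : Matrix (Fin k) (Fin m) ℂ) :
    Submodule ℂ (Matrix (Fin k) (Fin m) ℂ × Matrix (Fin m) (Fin k) ℂ) where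
  carrier := {PQ | B * PQ.1 = PQ.2 * C ∧ PQ.1 * B = C * PQ.2}
  zero_mem' := by simp
  add_mem' := by
    rintro x y ⟨hx1, hx2⟩ ⟨hy1, hy2⟩
    constructor
    · simp only [Prod.fst_add, Prod.snd_add, Matrix.mul_add, Matrix.add_mul, hx1, hy1]
    · simp only [Prod.fst_add, Prod.snd_add, Matrix.mul_add, Matrix.add_mul, hx2, hy2]
  smul_mem' := by
    rintro t x ⟨hx1, hx2⟩
    constructor
    · simp only [Prod.smul_fst, Prod.smul_snd, Matrix.mul_smul, Matrix.smul_mul, hx1, hx2]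
    · simp only [Prod.smul_fst, Prod.smul_snd, Matrix.mul_smul, Matrix.smul_mul, hx1, hx2]

/-- Trace pairing. -/
noncomputable def XiB (m k : ℕ) :
    (Matrix (Fin m) (Fin k) ℂ × Matrix (Fin k) (Fin m) ℂ)
      →ₗ[ℂ] (Matrix (Fin k) (Fin m) ℂ × Matrix (Fin m) (Fin k) ℂ) →ₗ[ℂ] ℂ :=
  LinearMap.mk₂ ℂ
    (fun UV PQ => Matrix.trace (UV.1 * PQ.1) + Matrix.trace (UV.2 * PQ.2))
    (by
      rintro x y z
      simp only [Prod.fst_add, Prod.snd_add, Matrix.add_mul, Matrix.trace_add]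
      ring)
    (by
      rintro t x z
      simp only [Prod.smul_fst, Prod.smul_snd, Matrix.smul_mul, Matrix.trace_smul, smul_eq_mul]
      ring)
    (by
      rintro x y z
      simp only [Prod.fst_add, Prod.snd_add, Matrix.mul_add, Matrix.trace_add]
      ring)
    (by
      rintro t x z
      simp only [Prod.smul_fst, Prod.smul_snd, Matrix.mul_smul, Matrix.trace_smul, smul_eq_mul]
      ring)

lemma XiB_injective : Function.Injective (XiB m k) := by
  intro x y hxy
  have h : ∀ PQ, XiB m k x PQ = XiB m k y PQ := fun PQ => by rw [hxy]
  have hU : x.1 = y.1 := by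
    ext i j
    have := h (Matrix.single j i 1, 0)
    simp only [XiB, LinearMap.mk₂_apply, Matrix.mul_zero, Matrix.trace_zero, add_zero] at this
    rwa [_root_.trace_mul_single, _root_.trace_mul_single] at this
  have hV : x.2 = y.2 := by
    ext i j
    have := h (0, Matrix.single j i 1)
    simp only [XiB, LinearMap.mk₂_apply, Matrix.mul_zero, Matrix.trace_zero, zero_add] at this
    rwa [_root_.trace_mul_single, _root_.trace_mul_single] at this
  exact Prod.ext hU hV

lemma range_XiB_Tmap_le (B : Matrix (Fin m) (Fin k) ℂ) (C : Matrix (Fin k) (Fin m) ℂ) :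
    range ((XiB m k) ∘ₗ (Tmap B C)) ≤ (Wmat B C).dualAnnihilator := by
  rintro φ ⟨⟨A, D⟩, rfl⟩
  rw [Submodule.mem_dualAnnihilator]
  rintro ⟨P, Q⟩ ⟨h1, h2⟩
  dsimp only at h1 h2
  simp only [LinearMap.comp_apply]
  have hT : Tmap B C (A, D) = (A * B - B * D, D * C - C * A) := rfl
  rw [hT]
  have happ : XiB m k (A * B - B * D, D * C - C * A) (P, Q)
      = Matrix.trace ((A * B - B * D) * P) + Matrix.trace ((D * C - C * A) * Q) := rfl
  rw [happ]
  rw [Matrix.sub_mul, Matrix.sub_mul, Matrix.trace_sub, Matrix.trace_sub]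
  have e1 : Matrix.trace (A * B * P) = Matrix.trace (C * A * Q) := by
    rw [Matrix.mul_assoc, h1, ← Matrix.mul_assoc, Matrix.trace_mul_comm, ← Matrix.mul_assoc]
  have e2 : Matrix.trace (B * D * P) = Matrix.trace (D * C * Q) := by
    rw [Matrix.mul_assoc, Matrix.trace_mul_comm, Matrix.mul_assoc, h2, ← Matrix.mul_assoc]
  rw [e1, e2]
  ring

lemma finrank_kerT_ge (hmk : m ≤ k) (B : Matrix (Fin m) (Fin k) ℂ)
    (C : Matrix (Fin k) (Fin m) ℂ) :
    (k - m) ^ 2 + finrank ℂ ↥(Wmat B C) ≤ finrank ℂ ↥(ker (Tmap B C)) := by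
  classical
  -- ambient dimensions
  have hdim1 : finrank ℂ (Matrix (Fin m) (Fin m) ℂ × Matrix (Fin k) (Fin k) ℂ)
      = m * m + k * k := by
    rw [Module.finrank_prod, Module.finrank_matrix, Module.finrank_matrix]
    simp [Module.finrank_self]
  have hdim2 : finrank ℂ (Matrix (Fin k) (Fin m) ℂ × Matrix (Fin m) (Fin k) ℂ)
      = k * m + m * k := by
    rw [Module.finrank_prod, Module.finrank_matrix, Module.finrank_matrix]
    simp [Module.finrank_self]
  -- rank-nullity for T
  have hrnT : finrank ℂ ↥(range (Tmap B C)) + finrank ℂ ↥(ker (Tmap B C))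
      = m * m + k * k := by
    rw [← hdim1]
    exact finrank_range_add_finrank_ker _
  -- rank of T equals rank of Xi ∘ T
  have hrk : finrank ℂ ↥(range ((XiB m k) ∘ₗ (Tmap B C)))
      = finrank ℂ ↥(range (Tmap B C)) := by
    rw [LinearMap.range_comp]
    exact (LinearEquiv.finrank_eq
      (Submodule.equivMapOfInjective _ XiB_injective (range (Tmap B C)))).symm
  -- annihilator dimension
  have hann : finrank ℂ ↥(range ((XiB m k) ∘ₗ (Tmap B C)))
      ≤ finrank ℂ ↥((Wmat B C).dualAnnihilator) :=
    Submodule.finrank_mono (range_XiB_Tmap_le B C)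
  have hannd : finrank ℂ ↥((Wmat B C).dualAnnihilator) + finrank ℂ ↥(Wmat B C)
      = k * m + m * k := by
    have he := LinearEquiv.finrank_eq (Subspace.quotEquivAnnihilator (Wmat B C))
    have hq := Submodule.finrank_quotient_add_finrank (Wmat B C)
    rw [hdim2] at hq
    omega
  have hsq : (k - m) ^ 2 + (m * k + m * k) = m * m + k * k := by
    obtain ⟨d, rfl⟩ : ∃ d, k = m + d := ⟨k - m, by omega⟩
    have hsub : (m + d) - m = d := by omega
    rw [hsub]
    ring
  have hmk2 : k * m = m * k := Nat.mul_comm k m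
  omega

end Duality
section Transfer

variable {m k : ℕ}

set_option maxHeartbeats 800000 in
lemma finrank_Wmat_ge (hmk : m ≤ k) (B : Matrix (Fin m) (Fin k) ℂ)
    (C : Matrix (Fin k) (Fin m) ℂ) :
    m ≤ finrank ℂ ↥(Wmat B C) := by
  classical
  set e : (Matrix (Fin k) (Fin m) ℂ × Matrix (Fin m) (Fin k) ℂ) ≃ₗ[ℂ]
      (((Fin m → ℂ) →ₗ[ℂ] (Fin k → ℂ)) × ((Fin k → ℂ) →ₗ[ℂ] (Fin m → ℂ))) :=
    (Matrix.toLin' (R := ℂ) (m := Fin k) (n := Fin m)).prodCongr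
      (Matrix.toLin' (R := ℂ) (m := Fin m) (n := Fin k)) with he
  have hmap : Submodule.map (e : _ →ₗ[ℂ] _) (Wmat B C) = Wsub (Matrix.toLin' B) (Matrix.toLin' C) := by
    ext z
    simp only [Submodule.mem_map]
    constructor
    · rintro ⟨⟨P, Q⟩, ⟨h1, h2⟩, rfl⟩
      dsimp only at h1 h2
      constructor
      · show Matrix.toLin' B ∘ₗ Matrix.toLin' P = Matrix.toLin' Q ∘ₗ Matrix.toLin' C
        rw [← Matrix.toLin'_mul, ← Matrix.toLin'_mul, h1]
      · show Matrix.toLin' P ∘ₗ Matrix.toLin' B = Matrix.toLin' C ∘ₗ Matrix.toLin' Q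
        rw [← Matrix.toLin'_mul, ← Matrix.toLin'_mul, h2]
    · rintro ⟨hz1, hz2⟩
      refine ⟨(Matrix.toLin'.symm z.1, Matrix.toLin'.symm z.2), ⟨?_, ?_⟩, ?_⟩
      · apply Matrix.toLin'.injective
        rw [Matrix.toLin'_mul, Matrix.toLin'_mul, LinearEquiv.apply_symm_apply,
          LinearEquiv.apply_symm_apply]
        exact hz1
      · apply Matrix.toLin'.injective
        rw [Matrix.toLin'_mul, Matrix.toLin'_mul, LinearEquiv.apply_symm_apply,
          LinearEquiv.apply_symm_apply]
        exact hz2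
      · show (Matrix.toLin' (Matrix.toLin'.symm z.1), Matrix.toLin' (Matrix.toLin'.symm z.2)) = z
        rw [LinearEquiv.apply_symm_apply, LinearEquiv.apply_symm_apply]
  have hfr : finrank ℂ ↥(Wmat B C)
      = finrank ℂ ↥(Wsub (Matrix.toLin' B) (Matrix.toLin' C)) := by
    rw [← hmap]
    exact LinearEquiv.finrank_eq (e.submoduleMap (Wmat B C))
  rw [hfr]
  have hm : finrank ℂ (Fin m → ℂ) = m := by
    rw [Module.finrank_pi]
    exact Fintype.card_fin m
  have hk : finrank ℂ (Fin k → ℂ) = k := by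
    rw [Module.finrank_pi]
    exact Fintype.card_fin k
  have := finrank_Wsub_ge (Matrix.toLin' B) (Matrix.toLin' C) (by rw [hm, hk]; exact hmk)
  rw [hm] at this
  exact this

/-- The full lower bound in matrix form. -/
lemma finrank_kerT_ge_final (hmk : m ≤ k) (B : Matrix (Fin m) (Fin k) ℂ)
    (C : Matrix (Fin k) (Fin m) ℂ) :
    (k - m) ^ 2 + m ≤ finrank ℂ ↥(ker (Tmap B C)) := by
  have h1 := finrank_kerT_ge hmk B C
  have h2 := finrank_Wmat_ge hmk B C
  omega

end Transfer
section Upper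

/-- Diagonal matrix with distinct nonzero entries `1, 2, …, m`. -/
noncomputable def Lam (m : ℕ) : Matrix (Fin m) (Fin m) ℂ :=
  Matrix.diagonal (fun i => ((i : ℕ) : ℂ) + 1)

noncomputable def B0 (m w k : ℕ) (hk : m + w = k) : Matrix (Fin m) (Fin k) ℂ :=
  (Matrix.fromCols (1 : Matrix (Fin m) (Fin m) ℂ)
    (0 : Matrix (Fin m) (Fin w) ℂ)).submatrix _root_.id ⇑(finSumFinEquiv.trans (finCongr hk)).symm

noncomputable def C0 (m w k : ℕ) (hk : m + w = k) : Matrix (Fin k) (Fin m) ℂ :=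
  (Matrix.fromRows (Lam m)
    (0 : Matrix (Fin w) (Fin m) ℂ)).submatrix ⇑(finSumFinEquiv.trans (finCongr hk)).symm _root_.id

set_option maxHeartbeats 1000000 in
lemma finrank_kerT_B0C0 (m w k : ℕ) (hk : m + w = k) :
    finrank ℂ ↥(ker (Tmap (B0 m w k hk) (C0 m w k hk))) = w * w + m := by
  classical
  set ek : (Fin m ⊕ Fin w) ≃ Fin k := finSumFinEquiv.trans (finCongr hk) with hek
  set M1 : Matrix (Fin m) (Fin m ⊕ Fin w) ℂ := Matrix.fromCols 1 0 with hM1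
  set M2 : Matrix (Fin m ⊕ Fin w) (Fin m) ℂ := Matrix.fromRows (Lam m) 0 with hM2
  set R := Matrix.reindexLinearEquiv ℂ ℂ ek ek with hR
  have hRapp : ∀ D' : Matrix (Fin m ⊕ Fin w) (Fin m ⊕ Fin w) ℂ,
      R D' = D'.submatrix ⇑ek.symm ⇑ek.symm := fun D' => rfl
  -- multiplication lemmas
  have hAB0 : ∀ A : Matrix (Fin m) (Fin m) ℂ,
      A * B0 m w k hk = (A * M1).submatrix _root_.id ⇑ek.symm := by
    intro A
    ext i j
    rw [Matrix.submatrix_apply, Matrix.mul_apply, Matrix.mul_apply]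
    rfl
  have hB0D : ∀ D' : Matrix (Fin m ⊕ Fin w) (Fin m ⊕ Fin w) ℂ,
      B0 m w k hk * R D' = (M1 * D').submatrix _root_.id ⇑ek.symm := by
    intro D'
    rw [hRapp]
    exact Matrix.submatrix_mul_equiv M1 D' _root_.id ek.symm ⇑ek.symm
  have hC0A : ∀ A : Matrix (Fin m) (Fin m) ℂ,
      C0 m w k hk * A = (M2 * A).submatrix ⇑ek.symm _root_.id := by
    intro A
    ext i j
    rw [Matrix.submatrix_apply, Matrix.mul_apply, Matrix.mul_apply]
    rfl
  have hDC0 : ∀ D' : Matrix (Fin m ⊕ Fin w) (Fin m ⊕ Fin w) ℂ,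
      R D' * C0 m w k hk = (D' * M2).submatrix ⇑ek.symm _root_.id := by
    intro D'
    rw [hRapp]
    exact Matrix.submatrix_mul_equiv D' M2 ⇑ek.symm ek.symm _root_.id
  -- submatrix cancellation
  have hcancel_c : ∀ X Y : Matrix (Fin m) (Fin m ⊕ Fin w) ℂ,
      X.submatrix _root_.id ⇑ek.symm = Y.submatrix _root_.id ⇑ek.symm → X = Y := by
    intro X Y h
    have h2 := congrArg (fun Z : Matrix (Fin m) (Fin k) ℂ => Z.submatrix (_root_.id : Fin m → Fin m) ⇑ek) h
    ext i j
    simpa using congrFun (congrFun h i) (ek j)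
  have hcancel_r : ∀ X Y : Matrix (Fin m ⊕ Fin w) (Fin m) ℂ,
      X.submatrix ⇑ek.symm _root_.id = Y.submatrix ⇑ek.symm _root_.id → X = Y := by
    intro X Y h
    have h2 := congrArg (fun Z : Matrix (Fin k) (Fin m) ℂ => Z.submatrix ⇑ek (_root_.id : Fin m → Fin m)) h
    ext i j
    simpa using congrFun (congrFun h (ek i)) j
  -- the parametrizing map
  set Θ : ((Fin m → ℂ) × Matrix (Fin w) (Fin w) ℂ) →ₗ[ℂ]
      (Matrix (Fin m) (Fin m) ℂ × Matrix (Fin k) (Fin k) ℂ) :=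
    { toFun := fun aD => (Matrix.diagonal aD.1,
        R (Matrix.fromBlocks (Matrix.diagonal aD.1) 0 0 aD.2))
      map_add' := by
        rintro ⟨a, D2⟩ ⟨a', D2'⟩
        simp only [Prod.fst_add, Prod.snd_add, Matrix.diagonal_add, Prod.mk_add_mk,
          Prod.mk.injEq]
        constructor
        · rfl
        · rw [← _root_.map_add]
          congr 1
          rw [Matrix.fromBlocks_add]
          congr 1 <;> simp
      map_smul' := by
        rintro t ⟨a, D2⟩
        simp only [Prod.smul_fst, Prod.smul_snd, RingHom.id_apply, Prod.smul_mk,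
          Prod.mk.injEq]
        constructor
        · rw [Matrix.diagonal_smul]
        · rw [← _root_.map_smul]
          congr 1
          rw [Matrix.fromBlocks_smul]
          congr 1 <;> simp } with hΘ
  have hΘapp : ∀ aD : (Fin m → ℂ) × Matrix (Fin w) (Fin w) ℂ,
      Θ aD = (Matrix.diagonal aD.1,
        R (Matrix.fromBlocks (Matrix.diagonal aD.1) 0 0 aD.2)) := fun _ => rfl
  -- injectivity
  have hΘinj : Function.Injective Θ := by
    intro x y hxy
    rw [hΘapp, hΘapp] at hxy
    have h1 : Matrix.diagonal x.1 = Matrix.diagonal y.1 := congrArg Prod.fst hxy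
    have ha : x.1 = y.1 := by
      funext i
      have := congrArg (fun M : Matrix (Fin m) (Fin m) ℂ => M i i) h1
      simpa [Matrix.diagonal_apply_eq] using this
    have h2 := congrArg Prod.snd hxy
    simp only at h2
    have h3 := R.injective h2
    have h4 := congrArg Matrix.toBlocks₂₂ h3
    simp only [Matrix.toBlocks_fromBlocks₂₂] at h4
    exact Prod.ext ha h4
  -- range identification
  have hrange : range Θ = ker (Tmap (B0 m w k hk) (C0 m w k hk)) := by
    ext AD
    simp only [LinearMap.mem_range, mem_ker]
    constructor
    · rintro ⟨⟨a, D2⟩, rfl⟩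
      rw [hΘapp]
      have hc1 : Matrix.diagonal a * B0 m w k hk
          = B0 m w k hk * R (Matrix.fromBlocks (Matrix.diagonal a) 0 0 D2) := by
        rw [hAB0, hB0D]
        congr 1
        rw [hM1, Matrix.mul_fromCols, Matrix.fromCols_mul_fromBlocks]
        simp
      have hc2 : R (Matrix.fromBlocks (Matrix.diagonal a) 0 0 D2) * C0 m w k hk
          = C0 m w k hk * Matrix.diagonal a := by
        rw [hDC0, hC0A]
        congr 1
        rw [hM2, Matrix.fromBlocks_mul_fromRows, Matrix.fromRows_mul]
        have hdd : Matrix.diagonal a * Lam m = Lam m * Matrix.diagonal a := by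
          have hfun : (fun i : Fin m => a i * (((i : ℕ) : ℂ) + 1))
              = (fun i : Fin m => (((i : ℕ) : ℂ) + 1) * a i) := by
            funext i
            ring
          rw [Lam, Matrix.diagonal_mul_diagonal, Matrix.diagonal_mul_diagonal, hfun]
        rw [hdd]
        simp
      have hT : Tmap (B0 m w k hk) (C0 m w k hk)
          (Matrix.diagonal a, R (Matrix.fromBlocks (Matrix.diagonal a) 0 0 D2))
          = (Matrix.diagonal a * B0 m w k hk
              - B0 m w k hk * R (Matrix.fromBlocks (Matrix.diagonal a) 0 0 D2),
            R (Matrix.fromBlocks (Matrix.diagonal a) 0 0 D2) * C0 m w k hk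
              - C0 m w k hk * Matrix.diagonal a) := rfl
      rw [hT, hc1, hc2]
      simp
    · intro hT
      obtain ⟨A, D⟩ := AD
      have h1 : A * B0 m w k hk - B0 m w k hk * D = 0 := congrArg Prod.fst hT
      have h2 : D * C0 m w k hk - C0 m w k hk * A = 0 := congrArg Prod.snd hT
      rw [sub_eq_zero] at h1 h2
      set D' := R.symm D with hD'
      have hD : D = R D' := (R.apply_symm_apply D).symm
      rw [hD, hB0D, hAB0] at h1
      rw [hD, hDC0, hC0A] at h2
      have h1' : A * M1 = M1 * D' := hcancel_c _ _ h1
      have h2' : D' * M2 = M2 * A := hcancel_r _ _ h2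
      -- unfold blocks of D'
      have hDblocks : D' = Matrix.fromBlocks D'.toBlocks₁₁ D'.toBlocks₁₂
          D'.toBlocks₂₁ D'.toBlocks₂₂ := (Matrix.fromBlocks_toBlocks D').symm
      rw [hDblocks] at h1' h2'
      rw [hM1, Matrix.mul_fromCols, Matrix.fromCols_mul_fromBlocks] at h1'
      simp only [Matrix.mul_one, Matrix.mul_zero, Matrix.one_mul, Matrix.zero_mul,
        add_zero, zero_add] at h1'
      obtain ⟨hA11, hA12⟩ := Matrix.fromCols_inj h1'
      rw [hM2, Matrix.fromBlocks_mul_fromRows, Matrix.fromRows_mul] at h2'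
      simp only [Matrix.mul_zero, Matrix.zero_mul, add_zero, zero_add] at h2'
      obtain ⟨hL1, hL2⟩ := Matrix.fromRows_inj h2'
      -- hA11 : A = D'.toBlocks₁₁, hA12 : 0 = D'.toBlocks₁₂
      -- hL1 : D'.toBlocks₁₁ * Lam m = Lam m * A, hL2 : D'.toBlocks₂₁ * Lam m = 0
      have hcomm : A * Lam m = Lam m * A := by
        nth_rewrite 1 [hA11]
        exact hL1
      have hAdiag : A = Matrix.diagonal (fun i => A i i) := by
        ext i j
        by_cases hij : i = j
        · subst hij
          simp [Matrix.diagonal_apply_eq]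
        · rw [Matrix.diagonal_apply_ne _ hij]
          have he := congrArg (fun M : Matrix (Fin m) (Fin m) ℂ => M i j) hcomm
          simp only [Lam] at he
          rw [Matrix.mul_diagonal, Matrix.diagonal_mul] at he
          have hne : ((j : ℕ) : ℂ) + 1 - (((i : ℕ) : ℂ) + 1) ≠ 0 := by
            intro h0
            apply hij
            have : ((i : ℕ) : ℂ) = ((j : ℕ) : ℂ) := by linear_combination -h0
            exact Fin.ext (by exact_mod_cast this)
          have hz : A i j * (((j : ℕ) : ℂ) + 1 - (((i : ℕ) : ℂ) + 1)) = 0 := by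
            linear_combination he
          rcases mul_eq_zero.mp hz with h | h
          · exact h
          · exact absurd h hne
      have hT21 : D'.toBlocks₂₁ = 0 := by
        ext i j
        have he := congrArg (fun M : Matrix (Fin w) (Fin m) ℂ => M i j) hL2
        simp only [Lam] at he
        rw [Matrix.mul_diagonal] at he
        have hne : ((j : ℕ) : ℂ) + 1 ≠ 0 := Nat.cast_add_one_ne_zero (j : ℕ)
        simp only [Matrix.zero_apply] at he ⊢
        exact (mul_eq_zero.mp he).resolve_right hne
      refine ⟨(fun i => A i i, D'.toBlocks₂₂), ?_⟩
      rw [hΘapp]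
      have hfst : Matrix.diagonal (fun i => A i i) = A := hAdiag.symm
      refine Prod.ext hfst ?_
      show R (Matrix.fromBlocks (Matrix.diagonal fun i => A i i) 0 0 D'.toBlocks₂₂) = D
      rw [hD]
      congr 1
      conv_rhs => rw [hDblocks]
      rw [← hAdiag, ← hA11, ← hA12, hT21]
  -- conclude
  have hfr : finrank ℂ ((Fin m → ℂ) × Matrix (Fin w) (Fin w) ℂ)
      = finrank ℂ ↥(ker (Tmap (B0 m w k hk) (C0 m w k hk))) := by
    rw [← hrange]
    exact LinearEquiv.finrank_eq (LinearEquiv.ofInjective Θ hΘinj)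
  rw [← hfr, Module.finrank_prod, Module.finrank_pi, Module.finrank_matrix]
  simp only [Module.finrank_self, Fintype.card_fin, mul_one]
  omega
end Upper

/-- For `1 ≤ m`, `2m ≤ n` and `h = gl_m(ℂ) ⊕ gl_{n−m}(ℂ)` block-diagonal in `gl_n(ℂ)`, the
minimum over `X ∈ h^⊥` of the dimension of the centralizer of `X` in `h` is
`(n−2m)² + m` (and it is attained; in particular some `X ∈ h^⊥` has centralizer in `h` of
dimension exactly `(n−2m)² + m`). -/
theorem stmt14 {m n : ℕ} (hm : 1 ≤ m) (hmn : 2 * m ≤ n) :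
    IsLeast {d : ℕ | ∃ X ∈ perpOf (diagPair m (n - m) : Set _),
        d = Module.finrank ℂ ↥(centIn (diagPair m (n - m)) X)}
      ((n - 2 * m) ^ 2 + m) := by
  set k := n - m with hkdef
  have hmk : m ≤ k := by omega
  have hw : m + (k - m) = k := by omega
  have hw2 : k - m = n - 2 * m := by omega
  constructor
  · refine ⟨Matrix.fromBlocks 0 (B0 m (k - m) k hw) (C0 m (k - m) k hw) 0, ?_, ?_⟩
    · rw [mem_perp_diagPair_iff]
      rw [Matrix.toBlocks_fromBlocks₁₂, Matrix.toBlocks_fromBlocks₂₁]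
    · rw [finrank_centIn_eq, finrank_kerT_B0C0, hw2, ← pow_two]
  · rintro d ⟨X, hX, rfl⟩
    have hX' : X = Matrix.fromBlocks 0 X.toBlocks₁₂ X.toBlocks₂₁ 0 :=
      mem_perp_diagPair_iff.mp hX
    calc (n - 2 * m) ^ 2 + m = (k - m) ^ 2 + m := by rw [hw2]
      _ ≤ finrank ℂ ↥(ker (Tmap X.toBlocks₁₂ X.toBlocks₂₁)) :=
          finrank_kerT_ge_final hmk _ _
      _ = finrank ℂ ↥(centIn (diagPair m k)
            (Matrix.fromBlocks 0 X.toBlocks₁₂ X.toBlocks₂₁ 0)) :=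
          (finrank_centIn_eq _ _).symm
      _ = finrank ℂ ↥(centIn (diagPair m k) X) := by rw [← hX']
end

section
/- Let n ≥ 1 and let h ⊆ gl_{2n+1}(ℂ) be the image of sp_{2n}(ℂ) under the embedding X ↦ diag(X,0) into the upper-left 2n×2n block. Let h^⊥ be the orthogonal complement of h in gl_{2n+1}(ℂ) with respect to the trace form. Then there exists X ∈ h^⊥ such that {Y ∈ h : [Y,X] = 0} = 0; i.e., the generic stabilizer of h acting on h^⊥ is trivial. -/
/-! Common definitions: `gl n` = n×n complex matrices with commutator bracket;
sl₂-triples; Jordan type of a nilpotent matrix; centralizers; sphericality. -/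

open Matrix

attribute [local instance 100] LieRing.ofAssociativeRing

/-- The embedding `X ↦ diag(X, 0)` of `gl_{2n}(ℂ)` into the upper-left block of
`gl_{2n+1}(ℂ)`. -/
noncomputable def embUL (n : ℕ) :
    Matrix (Fin n ⊕ Fin n) (Fin n ⊕ Fin n) ℂ →ₗ[ℂ]
      Matrix ((Fin n ⊕ Fin n) ⊕ Fin 1) ((Fin n ⊕ Fin n) ⊕ Fin 1) ℂ where
  toFun X := Matrix.fromBlocks X 0 0 0
  map_add' X Y := by
    ext i j
    cases i <;> cases j <;> simp [Matrix.add_apply]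
  map_smul' c X := by
    ext i j
    cases i <;> cases j <;> simp [Matrix.smul_apply]

/-- The image of `sp_{2n}(ℂ)` in `gl_{2n+1}(ℂ)` under the upper-left block embedding, as a
subspace of `gl_{2n+1}(ℂ)`. -/
noncomputable def spUL (n : ℕ) :
    Submodule ℂ (Matrix ((Fin n ⊕ Fin n) ⊕ Fin 1) ((Fin n ⊕ Fin n) ⊕ Fin 1) ℂ) :=
  (LieAlgebra.Symplectic.sp (Fin n) ℂ).toSubmodule.map (embUL n)

/-! Auxiliary material for the proof. -/

/-- Diagonal entries `1, 2, …, n, 1, 2, …, n`. -/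
noncomputable def dd {n : ℕ} : Fin n ⊕ Fin n → ℂ :=
  Sum.elim (fun a => (a : ℕ) + 1) (fun a => (a : ℕ) + 1)

lemma sp_diag_entry {n : ℕ} {Z : Matrix (Fin n ⊕ Fin n) (Fin n ⊕ Fin n) ℂ}
    (hZ : Z ∈ LieAlgebra.Symplectic.sp (Fin n) ℂ) (a : Fin n) :
    Z (Sum.inr a) (Sum.inr a) = - Z (Sum.inl a) (Sum.inl a) := by
  rw [LieAlgebra.Symplectic.sp, mem_skewAdjointMatricesLieSubalgebra,
    mem_skewAdjointMatricesSubmodule] at hZ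
  have h := congrFun (congrFun hZ (Sum.inr a)) (Sum.inl a)
  simpa [Matrix.mul_apply, Matrix.J, Matrix.fromBlocks, Fintype.sum_sum_type,
    Matrix.one_apply, Finset.sum_ite_eq, Finset.sum_ite_eq'] using h

lemma centralizer_zero {n : ℕ} {Z : Matrix (Fin n ⊕ Fin n) (Fin n ⊕ Fin n) ℂ}
    (hZ : Z ∈ LieAlgebra.Symplectic.sp (Fin n) ℂ)
    (hc : ⁅(Matrix.fromBlocks Z 0 0 0 :
        Matrix ((Fin n ⊕ Fin n) ⊕ Fin 1) ((Fin n ⊕ Fin n) ⊕ Fin 1) ℂ),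
      (Matrix.fromBlocks (Matrix.diagonal dd) (Matrix.of fun _ _ => 1)
        (Matrix.of fun _ _ => 1) 0 :
        Matrix ((Fin n ⊕ Fin n) ⊕ Fin 1) ((Fin n ⊕ Fin n) ⊕ Fin 1) ℂ)⁆ = 0) :
    Z = 0 := by
  rw [Ring.lie_def, sub_eq_zero] at hc
  rw [Matrix.fromBlocks_multiply, Matrix.fromBlocks_multiply] at hc
  have h11 : Z * Matrix.diagonal dd = Matrix.diagonal dd * Z := by
    have := congrArg Matrix.toBlocks₁₁ hc
    simpa [Matrix.toBlocks_fromBlocks₁₁] using this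
  have h12 : Z * (Matrix.of fun _ _ => (1:ℂ) : Matrix (Fin n ⊕ Fin n) (Fin 1) ℂ) = 0 := by
    have := congrArg Matrix.toBlocks₁₂ hc
    simpa [Matrix.toBlocks_fromBlocks₁₂] using this
  have h21 : (Matrix.of fun _ _ => (1:ℂ) : Matrix (Fin 1) (Fin n ⊕ Fin n) ℂ) * Z = 0 := by
    have := congrArg Matrix.toBlocks₂₁ hc
    simpa [Matrix.toBlocks_fromBlocks₂₁] using this.symm
  have e1 : ∀ u v, Z u v * dd v = dd u * Z u v := by
    intro u v
    have := congrFun (congrFun h11 u) v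
    simpa [Matrix.mul_diagonal, Matrix.diagonal_mul] using this
  have offdiag : ∀ u v : Fin n ⊕ Fin n,
      (Sum.elim id id u ≠ Sum.elim id id v) → Z u v = 0 := by
    intro u v huv
    have h := e1 u v
    have hdd : dd u ≠ dd v := by
      intro h'
      apply huv
      cases u <;> cases v <;> simp [dd] at h' ⊢ <;>
        exact Fin.ext (Nat.cast_injective (by linear_combination h'))
    have h2 : Z u v * (dd v - dd u) = 0 := by linear_combination h
    rcases mul_eq_zero.mp h2 with h3 | h3
    · exact h3
    · exact absurd (by linear_combination -h3) hdd
  have rowsum : ∀ u, (∑ b, Z u (Sum.inl b)) + (∑ b, Z u (Sum.inr b)) = 0 := by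
    intro u
    have h := congrFun (congrFun h12 u) 0
    simpa [Matrix.mul_apply, Fintype.sum_sum_type] using h
  have colsum : ∀ v, (∑ b, Z (Sum.inl b) v) + (∑ b, Z (Sum.inr b) v) = 0 := by
    intro v
    have h := congrFun (congrFun h21 0) v
    simpa [Matrix.mul_apply, Fintype.sum_sum_type] using h
  have single : ∀ (f : Fin n → ℂ) (a : Fin n), (∀ b, b ≠ a → f b = 0) →
      (∑ b, f b) = f a := fun f a h =>
    Finset.sum_eq_single a (fun b _ hb => h b hb)
      (fun h' => absurd (Finset.mem_univ a) h')
  have key : ∀ a : Fin n, Z (Sum.inl a) (Sum.inl a) = 0 ∧ Z (Sum.inl a) (Sum.inr a) = 0 ∧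
      Z (Sum.inr a) (Sum.inl a) = 0 ∧ Z (Sum.inr a) (Sum.inr a) = 0 := by
    intro a
    have hS := sp_diag_entry hZ a
    have r1 := rowsum (Sum.inl a)
    have r2 := rowsum (Sum.inr a)
    have c1 := colsum (Sum.inl a)
    rw [single (fun b => Z (Sum.inl a) (Sum.inl b)) a
          (fun b hb => offdiag _ _ (by simpa using Ne.symm hb)),
        single (fun b => Z (Sum.inl a) (Sum.inr b)) a
          (fun b hb => offdiag _ _ (by simpa using Ne.symm hb))] at r1
    rw [single (fun b => Z (Sum.inr a) (Sum.inl b)) a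
          (fun b hb => offdiag _ _ (by simpa using Ne.symm hb)),
        single (fun b => Z (Sum.inr a) (Sum.inr b)) a
          (fun b hb => offdiag _ _ (by simpa using Ne.symm hb))] at r2
    rw [single (fun b => Z (Sum.inl b) (Sum.inl a)) a
          (fun b hb => offdiag _ _ (by simpa using hb)),
        single (fun b => Z (Sum.inr b) (Sum.inl a)) a
          (fun b hb => offdiag _ _ (by simpa using hb))] at c1
    have hp : Z (Sum.inl a) (Sum.inl a) = 0 := by linear_combination (c1 - r2 + hS) / 2
    refine ⟨hp, by linear_combination r1 - hp, by linear_combination c1 - hp,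
      by linear_combination hS - hp⟩
  ext u v
  rcases u with a | a <;> rcases v with b | b <;> rcases eq_or_ne a b with rfl | hab
  · simpa using (key a).1
  · simpa using offdiag (Sum.inl a) (Sum.inl b) hab
  · simpa using (key a).2.1
  · simpa using offdiag (Sum.inl a) (Sum.inr b) hab
  · simpa using (key a).2.2.1
  · simpa using offdiag (Sum.inr a) (Sum.inl b) hab
  · simpa using (key a).2.2.2
  · simpa using offdiag (Sum.inr a) (Sum.inr b) hab

/-- For `h` the image of `sp_{2n}(ℂ)` in `gl_{2n+1}(ℂ)` (upper-left block), there is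
`X ∈ h^⊥` whose centralizer in `h` is trivial. -/

theorem stmt16 {n : ℕ} (hn : 1 ≤ n) :
    ∃ X : Matrix ((Fin n ⊕ Fin n) ⊕ Fin 1) ((Fin n ⊕ Fin n) ⊕ Fin 1) ℂ,
      X ∈ perpOf (spUL n : Set _) ∧ ∀ Y ∈ spUL n, ⁅Y, X⁆ = 0 → Y = 0 := by
  classical
  refine ⟨Matrix.fromBlocks (Matrix.diagonal dd) (Matrix.of fun _ _ => 1)
    (Matrix.of fun _ _ => 1) 0, ?_, ?_⟩
  · intro Y hY
    obtain ⟨Z, hZ, rfl⟩ := Submodule.mem_map.mp hY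
    have hemb : embUL n Z = Matrix.fromBlocks Z 0 0 0 := rfl
    have hS := fun a => sp_diag_entry hZ a
    have tr4 : ∀ (A : Matrix (Fin n ⊕ Fin n) (Fin n ⊕ Fin n) ℂ)
        (B : Matrix (Fin n ⊕ Fin n) (Fin 1) ℂ) (C : Matrix (Fin 1) (Fin n ⊕ Fin n) ℂ)
        (D : Matrix (Fin 1) (Fin 1) ℂ),
        Matrix.trace (Matrix.fromBlocks A B C D) = Matrix.trace A + Matrix.trace D := by
      intros A B C D
      simp [Matrix.trace, Matrix.diag, Fintype.sum_sum_type]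
    rw [hemb, Matrix.fromBlocks_multiply, tr4]
    simp only [Matrix.mul_zero, Matrix.zero_mul, add_zero, zero_add, Matrix.trace_zero]
    have htr : Matrix.trace (Matrix.diagonal dd * Z) = ∑ u, dd u * Z u u := by
      simp [Matrix.trace, Matrix.diag, Matrix.diagonal_mul]
    rw [htr, Fintype.sum_sum_type, ← Finset.sum_add_distrib]
    refine Finset.sum_eq_zero fun a _ => ?_
    rw [hS a]
    simp only [dd, Sum.elim_inl, Sum.elim_inr]
    ring
  · intro Y hY hc
    obtain ⟨Z, hZ, rfl⟩ := Submodule.mem_map.mp hY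
    have hemb : embUL n Z = Matrix.fromBlocks Z 0 0 0 := rfl
    rw [hemb] at hc ⊢
    rw [centralizer_zero hZ hc]
    ext i j
    cases i <;> cases j <;> simp
end

section
/- Let sp_4(ℂ) = {X ∈ gl_4(ℂ) : XᵀJ + JX = 0} for the standard invertible skew-symmetric 4×4 matrix J, chosen so that ℂ^4 decomposes as an orthogonal direct sum of two 2-dimensional symplectic subspaces. Let k ⊆ sp_4(ℂ) be the block-diagonal subalgebra sp_2(ℂ) ⊕ sp_2(ℂ) corresponding to this decomposition. Then k is spherical in sp_4(ℂ): there exists a solvable Lie subalgebra b of sp_4(ℂ) with b + k = sp_4(ℂ). -/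
/-! Common definitions: `gl n` = n×n complex matrices with commutator bracket;
sl₂-triples; Jordan type of a nilpotent matrix; centralizers; sphericality. -/

open Matrix

attribute [local instance 100] LieRing.ofAssociativeRing

/-- The standard invertible skew-symmetric 4×4 matrix adapted to the decomposition of `ℂ⁴`
into the orthogonal direct sum of two 2-dimensional symplectic subspaces:
`J = diag(j, j)` with `j = [[0,1],[-1,0]]`. -/
noncomputable def J₄ : Matrix (Fin 2 ⊕ Fin 2) (Fin 2 ⊕ Fin 2) ℂ :=
  Matrix.fromBlocks !![0, 1; -1, 0] 0 0 !![0, 1; -1, 0]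

/-- `sp_4(ℂ) = {X ∈ gl_4(ℂ) : Xᵀ J + J X = 0}` for the block-diagonal `J = diag(j, j)`. -/
noncomputable def sp₄ : LieSubalgebra ℂ (Matrix (Fin 2 ⊕ Fin 2) (Fin 2 ⊕ Fin 2) ℂ) :=
  skewAdjointMatricesLieSubalgebra J₄

/-- The Lie subalgebra of block-diagonal matrices in `gl_4(ℂ)` (with respect to the
decomposition `ℂ⁴ = ℂ² ⊕ ℂ²`). -/
noncomputable def blockDiagLie :
    LieSubalgebra ℂ (Matrix (Fin 2 ⊕ Fin 2) (Fin 2 ⊕ Fin 2) ℂ) where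
  carrier := {X | (∀ i j, X (Sum.inl i) (Sum.inr j) = 0) ∧
    ∀ i j, X (Sum.inr i) (Sum.inl j) = 0}
  zero_mem' := by constructor <;> intro i j <;> simp
  add_mem' := by
    rintro a b ⟨ha1, ha2⟩ ⟨hb1, hb2⟩
    constructor <;> intro i j <;> simp [Matrix.add_apply, ha1, ha2, hb1, hb2]
  smul_mem' := by
    rintro c a ⟨ha1, ha2⟩
    constructor <;> intro i j <;> simp [Matrix.smul_apply, ha1, ha2]
  lie_mem' := by
    intro a b ha hb
    obtain ⟨ha1, ha2⟩ := ha
    obtain ⟨hb1, hb2⟩ := hb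
    have hmul : ∀ x y : Matrix (Fin 2 ⊕ Fin 2) (Fin 2 ⊕ Fin 2) ℂ,
        (∀ i j, x (Sum.inl i) (Sum.inr j) = 0) → (∀ i j, x (Sum.inr i) (Sum.inl j) = 0) →
        (∀ i j, y (Sum.inl i) (Sum.inr j) = 0) → (∀ i j, y (Sum.inr i) (Sum.inl j) = 0) →
        (∀ i j, (x * y) (Sum.inl i) (Sum.inr j) = 0) ∧
          ∀ i j, (x * y) (Sum.inr i) (Sum.inl j) = 0 := by
      intro x y hx1 hx2 hy1 hy2
      constructor <;> intro i j <;>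
        · rw [Matrix.mul_apply, Fintype.sum_sum_type]
          simp [hx1, hx2, hy1, hy2]
    refine ⟨fun i j => ?_, fun i j => ?_⟩
    · rw [Ring.lie_def, Matrix.sub_apply, (hmul a b ha1 ha2 hb1 hb2).1 i j,
        (hmul b a hb1 hb2 ha1 ha2).1 i j, sub_zero]
    · rw [Ring.lie_def, Matrix.sub_apply, (hmul a b ha1 ha2 hb1 hb2).2 i j,
        (hmul b a hb1 hb2 ha1 ha2).2 i j, sub_zero]

namespace Stmt17Aux

abbrev I4 : Type := Fin 2 ⊕ Fin 2

def ord : I4 → ℕ := Sum.elim (fun i => (i : ℕ)) (fun i => 2 + (i : ℕ))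

lemma ord_inj : Function.Injective ord := by decide

lemma ord_le (i : I4) : ord i ≤ 3 := by
  rcases i with i | i <;> (have := i.isLt; simp [ord]; omega)

noncomputable def gmat : Matrix I4 I4 ℂ :=
  fromBlocks !![1,0;0,1] !![0,0;0,1] !![0,1;1,0] !![1,0;0,1]

noncomputable def gimat : Matrix I4 I4 ℂ :=
  fromBlocks !![1,0;1,1] !![0,0;0,-1] !![-1,-1;-1,0] !![1,1;0,1]

lemma hgg : gmat * gimat = 1 := by
  ext i j
  rcases i with i | i <;> rcases j with j | j <;> fin_cases i <;> fin_cases j <;>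
    simp [gmat, gimat, Matrix.mul_apply, Fintype.sum_sum_type, Fin.sum_univ_two,
      Matrix.one_apply]

noncomputable def cj (X : Matrix I4 I4 ℂ) : Matrix I4 I4 ℂ := gimat * X * gmat

lemma gg' (Z : Matrix I4 I4 ℂ) : gmat * (gimat * Z) = Z := by
  rw [← Matrix.mul_assoc, hgg, Matrix.one_mul]

lemma cj_mul (X Y : Matrix I4 I4 ℂ) : cj (X * Y) = cj X * cj Y := by
  simp only [cj, Matrix.mul_assoc, gg']

lemma cj_add (X Y : Matrix I4 I4 ℂ) : cj (X + Y) = cj X + cj Y := by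
  simp only [cj, Matrix.mul_add, Matrix.add_mul]

lemma cj_sub (X Y : Matrix I4 I4 ℂ) : cj (X - Y) = cj X - cj Y := by
  simp only [cj, Matrix.mul_sub, Matrix.sub_mul]

lemma cj_smul (c : ℂ) (X : Matrix I4 I4 ℂ) : cj (c • X) = c • cj X := by
  simp only [cj, Matrix.mul_smul, Matrix.smul_mul]

lemma cj_zero : cj 0 = 0 := by simp [cj]

lemma cj_recover (X : Matrix I4 I4 ℂ) : gmat * cj X * gimat = X := by
  rw [cj, show gmat * (gimat * X * gmat) * gimat = gmat * gimat * X * (gmat * gimat) by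
    simp only [Matrix.mul_assoc], hgg, Matrix.one_mul, Matrix.mul_one]

lemma cj_lie (X Y : Matrix I4 I4 ℂ) : cj ⁅X, Y⁆ = cj X * cj Y - cj Y * cj X := by
  rw [Ring.lie_def, cj_sub, cj_mul, cj_mul]

lemma mulDeg {a b : ℕ} {A B : Matrix I4 I4 ℂ}
    (hA : ∀ i j, ord j < ord i + a → A i j = 0)
    (hB : ∀ i j, ord j < ord i + b → B i j = 0)
    {i j : I4} (h : ord j < ord i + a + b) : (A * B) i j = 0 := by
  rw [Matrix.mul_apply]
  apply Finset.sum_eq_zero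
  intro k _
  rcases lt_or_ge (ord k) (ord i + a) with hk | hk
  · rw [hA i k hk, zero_mul]
  · rw [hB k j (by omega), mul_zero]

lemma commDeg {A B : Matrix I4 I4 ℂ}
    (hA : ∀ i j, ord j < ord i → A i j = 0) (hB : ∀ i j, ord j < ord i → B i j = 0)
    {i j : I4} (h : ord j ≤ ord i) : (A * B - B * A) i j = 0 := by
  have hA' : ∀ i j, ord j < ord i + 0 → A i j = 0 := fun i j hh => hA i j (by omega)
  have hB' : ∀ i j, ord j < ord i + 0 → B i j = 0 := fun i j hh => hB i j (by omega)
  rcases h.lt_or_eq with hlt | heq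
  · rw [Matrix.sub_apply, mulDeg hA' hB' (by omega), mulDeg hB' hA' (by omega), sub_zero]
  · have hji : j = i := ord_inj heq
    subst hji
    have key : ∀ C D : Matrix I4 I4 ℂ, (∀ i j, ord j < ord i → C i j = 0) →
        (∀ i j, ord j < ord i → D i j = 0) → (C * D) j j = C j j * D j j := by
      intro C D hC hD
      rw [Matrix.mul_apply]
      apply Finset.sum_eq_single
      · intro k _ hkj
        rcases lt_trichotomy (ord k) (ord j) with hk | hk | hk
        · rw [hC j k hk, zero_mul]
        · exact absurd (ord_inj hk) hkj
        · rw [hD k j hk, mul_zero]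
      · intro hj; exact absurd (Finset.mem_univ j) hj
    rw [Matrix.sub_apply, key A B hA hB, key B A hB hA, mul_comm, sub_self]

/-- Upper-triangular (w.r.t. a generic flag) Lie subalgebra of `gl₄`. -/
noncomputable def T : LieSubalgebra ℂ (Matrix I4 I4 ℂ) where
  carrier := {X | ∀ i j, ord j < ord i → cj X i j = 0}
  zero_mem' := by intro i j h; simp [cj_zero]
  add_mem' := by
    intro a b ha hb i j h
    rw [cj_add, Matrix.add_apply, ha i j h, hb i j h, add_zero]
  smul_mem' := by
    intro c a ha i j h
    rw [cj_smul, Matrix.smul_apply, ha i j h, smul_zero]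
  lie_mem' := by
    intro a b ha hb i j h
    have ha' : ∀ i j, ord j < ord i + 0 → cj a i j = 0 := fun i j hh => ha i j (by omega)
    have hb' : ∀ i j, ord j < ord i + 0 → cj b i j = 0 := fun i j hh => hb i j (by omega)
    rw [cj_lie, Matrix.sub_apply, mulDeg ha' hb' (by omega), mulDeg hb' ha' (by omega),
      sub_zero]

lemma mem_T {X : Matrix I4 I4 ℂ} : X ∈ T ↔ ∀ i j, ord j < ord i → cj X i j = 0 := Iff.rfl

/-- Filtration ideals of `T`. -/
noncomputable def TId (d : ℕ) : LieIdeal ℂ T where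
  carrier := {x | ∀ i j, ord j < ord i + d → cj x.val i j = 0}
  zero_mem' := by intro i j h; simp [cj_zero]
  add_mem' := by
    intro a b ha hb i j h
    have hcoe : ((a + b : T) : Matrix I4 I4 ℂ) = (a : Matrix I4 I4 ℂ) + b := rfl
    rw [hcoe, cj_add, Matrix.add_apply, ha i j h, hb i j h, add_zero]
  smul_mem' := by
    intro c a ha i j h
    have hcoe : ((c • a : T) : Matrix I4 I4 ℂ) = c • (a : Matrix I4 I4 ℂ) := rfl
    rw [hcoe, cj_smul, Matrix.smul_apply, ha i j h, smul_zero]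
  lie_mem := by
    intro y x hx
    intro i j h
    have hy' : ∀ i j, ord j < ord i + 0 → cj (y : Matrix I4 I4 ℂ) i j = 0 :=
      fun i j hh => y.2 i j (by omega)
    have hcoe : ((⁅y, x⁆ : T) : Matrix I4 I4 ℂ) =
        ⁅(y : Matrix I4 I4 ℂ), (x : Matrix I4 I4 ℂ)⁆ := rfl
    rw [hcoe, cj_lie, Matrix.sub_apply, mulDeg hy' hx (by omega), mulDeg hx hy' (by omega),
      sub_zero]

lemma mem_TId {d : ℕ} {x : T} :
    x ∈ TId d ↔ ∀ i j, ord j < ord i + d → cj (x : Matrix I4 I4 ℂ) i j = 0 := Iff.rfl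

lemma TId4_le_bot : TId 4 ≤ ⊥ := by
  intro x hx
  rw [LieSubmodule.mem_bot]
  have hc : cj (x : Matrix I4 I4 ℂ) = 0 := by
    ext i j
    exact mem_TId.mp hx i j (by have := ord_le j; omega)
  have hval : (x : Matrix I4 I4 ℂ) = 0 := by
    rw [← cj_recover (x : Matrix I4 I4 ℂ), hc, Matrix.mul_zero, Matrix.zero_mul]
  exact Subtype.ext (by simpa using hval)

lemma TId_lie_le (a b : ℕ) : ⁅TId a, TId b⁆ ≤ TId (a + b) := by
  rw [LieSubmodule.lie_le_iff]
  intro x hx m hm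
  rw [mem_TId]
  intro i j h
  rw [mem_TId] at hx hm
  have hcoe : ((⁅x, m⁆ : T) : Matrix I4 I4 ℂ) =
      ⁅(x : Matrix I4 I4 ℂ), (m : Matrix I4 I4 ℂ)⁆ := rfl
  show cj ((⁅x, m⁆ : T) : Matrix I4 I4 ℂ) i j = 0
  rw [hcoe, cj_lie, Matrix.sub_apply, mulDeg hx hm (by omega), mulDeg hm hx (by omega),
    sub_zero]

lemma derived_one_le : LieAlgebra.derivedSeries ℂ T 1 ≤ TId 1 := by
  rw [LieAlgebra.derivedSeries_def, LieAlgebra.derivedSeriesOfIdeal_succ,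
    LieAlgebra.derivedSeriesOfIdeal_zero, LieSubmodule.lie_le_iff]
  intro x _ m _
  rw [mem_TId]
  intro i j h
  have hcoe : ((⁅x, m⁆ : T) : Matrix I4 I4 ℂ) =
      ⁅(x : Matrix I4 I4 ℂ), (m : Matrix I4 I4 ℂ)⁆ := rfl
  show cj ((⁅x, m⁆ : T) : Matrix I4 I4 ℂ) i j = 0
  rw [hcoe, cj_lie]
  exact commDeg x.2 m.2 (by omega)

instance T_solvable : LieAlgebra.IsSolvable T := by
  rw [LieAlgebra.isSolvable_iff ℂ]
  refine ⟨3, ?_⟩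
  rw [eq_bot_iff]
  have h2 : LieAlgebra.derivedSeries ℂ T 2 ≤ TId 2 := by
    have : LieAlgebra.derivedSeries ℂ T 2 = ⁅LieAlgebra.derivedSeries ℂ T 1,
        LieAlgebra.derivedSeries ℂ T 1⁆ := by
      rw [LieAlgebra.derivedSeries_def, LieAlgebra.derivedSeriesOfIdeal_succ,
        ← LieAlgebra.derivedSeries_def]
    rw [this]
    refine le_trans (LieSubmodule.mono_lie derived_one_le derived_one_le) ?_
    exact TId_lie_le 1 1
  have h3 : LieAlgebra.derivedSeries ℂ T 3 ≤ TId 4 := by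
    have : LieAlgebra.derivedSeries ℂ T 3 = ⁅LieAlgebra.derivedSeries ℂ T 2,
        LieAlgebra.derivedSeries ℂ T 2⁆ := by
      rw [LieAlgebra.derivedSeries_def, LieAlgebra.derivedSeriesOfIdeal_succ,
        ← LieAlgebra.derivedSeries_def]
    rw [this]
    exact le_trans (LieSubmodule.mono_lie h2 h2) (TId_lie_le 2 2)
  exact le_trans h3 TId4_le_bot


noncomputable def Ymat (u v w x y : ℂ) : Matrix I4 I4 ℂ :=
  fromBlocks !![-u-w+x, -v; -y, u+w-x] !![v, w; x, y] !![-y, w; x, -v] !![u, y; v, -u]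

lemma Ymat_mem_sp4 (u v w x y : ℂ) : Ymat u v w x y ∈ sp₄ := by
  refine (mem_skewAdjointMatricesSubmodule ..).mpr ?_
  show (Ymat u v w x y)ᵀ * J₄ = J₄ * (-(Ymat u v w x y))
  ext i j
  rcases i with i | i <;> rcases j with j | j <;> fin_cases i <;> fin_cases j <;>
    simp [Ymat, J₄, Matrix.mul_apply, Fintype.sum_sum_type, Fin.sum_univ_two] <;> ring

lemma Ymat_mem_T (u v w x y : ℂ) : Ymat u v w x y ∈ T := by
  rw [mem_T]
  rintro (i|i) (j|j) hij <;> fin_cases i <;> fin_cases j <;>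
    simp_all [ord, cj, gmat, gimat, Ymat, Matrix.mul_apply, Fintype.sum_sum_type,
      Fin.sum_univ_two] <;> ring

/-- The solvable subalgebra witnessing sphericality. -/
noncomputable def bAlg : LieSubalgebra ℂ (Matrix I4 I4 ℂ) := sp₄ ⊓ T

instance bAlg_solvable : LieAlgebra.IsSolvable bAlg :=
  (LieSubalgebra.inclusion_injective (inf_le_right : bAlg ≤ T)).lieAlgebra_isSolvable

end Stmt17Aux

/-- The block-diagonal subalgebra `sp_2(ℂ) ⊕ sp_2(ℂ)` of `sp_4(ℂ)` is spherical in
`sp_4(ℂ)`: there is a solvable Lie subalgebra `b` of `sp_4(ℂ)` with `b + k = sp_4(ℂ)`. -/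
theorem stmt17 : IsSphericalIn (sp₄ ⊓ blockDiagLie) sp₄ := by
  refine ⟨Stmt17Aux.bAlg, inf_le_left, Stmt17Aux.bAlg_solvable, ?_⟩
  open Stmt17Aux in
  apply le_antisymm
  · apply sup_le
    · intro x hx
      rw [LieSubalgebra.mem_toSubmodule] at hx ⊢
      exact (inf_le_left : bAlg ≤ sp₄) hx
    · intro x hx
      rw [LieSubalgebra.mem_toSubmodule] at hx ⊢
      exact (inf_le_left : sp₄ ⊓ blockDiagLie ≤ sp₄) hx
  · intro X hX0
    have hX : X ∈ sp₄ := (LieSubalgebra.mem_toSubmodule _).mp hX0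
    have heq : Xᵀ * J₄ = J₄ * (-X) := (mem_skewAdjointMatricesSubmodule ..).mp hX
    have h1 : X (Sum.inr 0) (Sum.inl 0) = -(X (Sum.inl 1) (Sum.inr 1)) := by
      have h := congrFun (congrFun heq (Sum.inr 1)) (Sum.inl 0)
      simp [J₄, Matrix.mul_apply, Fintype.sum_sum_type, Fin.sum_univ_two] at h
      linear_combination -h
    have h2 : X (Sum.inr 0) (Sum.inl 1) = X (Sum.inl 0) (Sum.inr 1) := by
      have h := congrFun (congrFun heq (Sum.inr 1)) (Sum.inl 1)
      simp [J₄, Matrix.mul_apply, Fintype.sum_sum_type, Fin.sum_univ_two] at h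
      linear_combination -h
    have h3 : X (Sum.inr 1) (Sum.inl 0) = X (Sum.inl 1) (Sum.inr 0) := by
      have h := congrFun (congrFun heq (Sum.inr 0)) (Sum.inl 0)
      simp [J₄, Matrix.mul_apply, Fintype.sum_sum_type, Fin.sum_univ_two] at h
      linear_combination -h
    have h4 : X (Sum.inr 1) (Sum.inl 1) = -(X (Sum.inl 0) (Sum.inr 0)) := by
      have h := congrFun (congrFun heq (Sum.inr 0)) (Sum.inl 1)
      simp [J₄, Matrix.mul_apply, Fintype.sum_sum_type, Fin.sum_univ_two] at h
      linear_combination h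
    set u := X (Sum.inr 0) (Sum.inr 0) with hu
    set v := X (Sum.inl 0) (Sum.inr 0) with hv
    set w := X (Sum.inl 0) (Sum.inr 1) with hw
    set x := X (Sum.inl 1) (Sum.inr 0) with hx
    set y := X (Sum.inl 1) (Sum.inr 1) with hy
    have hYb : Ymat u v w x y ∈ bAlg := ⟨Ymat_mem_sp4 u v w x y, Ymat_mem_T u v w x y⟩
    have hZk : X - Ymat u v w x y ∈ sp₄ ⊓ blockDiagLie := by
      refine ⟨?_, ?_, ?_⟩
      · exact sub_mem hX (Ymat_mem_sp4 u v w x y)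
      · intro i j
        fin_cases i <;> fin_cases j <;>
          simp [Ymat, hu, hv, hw, hx, hy]
      · intro i j
        fin_cases i <;> fin_cases j <;>
          simp [Ymat, h1, h2, h3, h4, hu, hv, hw, hx, hy]
    have hdecomp : X = Ymat u v w x y + (X - Ymat u v w x y) := by abel
    rw [hdecomp]
    exact Submodule.add_mem_sup ((LieSubalgebra.mem_toSubmodule _).mpr hYb)
      ((LieSubalgebra.mem_toSubmodule _).mpr hZk)
end
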